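/- arXiv:1112.1998 — 7 statements merged into one kernel-verified Lean document; each statement's English description precedes it below -/
import Mathlib

section
/- Let b ∈ L²(Ω;ℝⁿ) and suppose that the set {x ∈ Ω : |b(x)| > a(x)} has positive Lebesgue measure. Then the functional d ↦ ⟨d,b⟩ − F(d) is unbounded above on L²(Ω;ℝⁿ); that is, the Legendre–Fenchel conjugate F*(b) = sup{⟨d,b⟩ − F(d) : d ∈ L²(Ω;ℝⁿ)} equals +∞. -/
open MeasureTheory RealInnerProductSpace Function

lemma aux_int {α : Type*} [MeasurableSpace α] {μ : Measure α} {f g : α → ℝ}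
    (hf : MemLp f 2 μ) (hg : MemLp g 2 μ) : Integrable (fun x => f x * g x) μ := by
  have h := hg.smul (p := 2) (q := 2) (r := 1) hf
  rw [memLp_one_iff_integrable] at h
  exact h

/-- If `b ∈ L²(Ω;ℝⁿ)` and the set `{x ∈ Ω : |b(x)| > a(x)}` has positive
Lebesgue measure, then the Legendre–Fenchel conjugate
`F*(b) = sup {⟨d,b⟩ - ∫ a |d+g| : d ∈ L²(Ω;ℝⁿ)}` is `+∞`, i.e. the functional
`d ↦ ⟨d,b⟩ - F(d)` is unbounded above on `L²(Ω;ℝⁿ)`. -/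
theorem stmt_0 {n : ℕ} (hn : 2 ≤ n) (Ω : Set (EuclideanSpace ℝ (Fin n)))
    (hΩopen : IsOpen Ω) (hΩbdd : Bornology.IsBounded Ω)
    (μ : Measure (EuclideanSpace ℝ (Fin n))) (hμ : μ = volume.restrict Ω)
    (a : EuclideanSpace ℝ (Fin n) → ℝ) (ha2 : MemLp a 2 μ) (ha0 : ∀ᵐ x ∂μ, 0 ≤ a x)
    (g : EuclideanSpace ℝ (Fin n) → EuclideanSpace ℝ (Fin n)) (hg : MemLp g 2 μ)
    (b : EuclideanSpace ℝ (Fin n) → EuclideanSpace ℝ (Fin n)) (hb : MemLp b 2 μ)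
    (hset : 0 < μ {x | a x < ‖b x‖}) :
    ∀ M : ℝ, ∃ d : EuclideanSpace ℝ (Fin n) → EuclideanSpace ℝ (Fin n),
      MemLp d 2 μ ∧
      M < (∫ x, ⟪d x, b x⟫ ∂μ) - ∫ x, a x * ‖d x + g x‖ ∂μ := by
  intro M
  set a' : EuclideanSpace ℝ (Fin n) → ℝ := ha2.1.mk a with ha'def
  set b' : EuclideanSpace ℝ (Fin n) → EuclideanSpace ℝ (Fin n) := hb.1.mk b with hb'def
  have haa' : a =ᵐ[μ] a' := ha2.1.ae_eq_mk
  have hbb' : b =ᵐ[μ] b' := hb.1.ae_eq_mk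
  set S : Set (EuclideanSpace ℝ (Fin n)) := {x | a' x < ‖b' x‖} with hSdef
  have hS : MeasurableSet S := by
    exact measurableSet_lt ha2.1.stronglyMeasurable_mk.measurable
      hb.1.stronglyMeasurable_mk.measurable.norm
  have hSpos : 0 < μ S := by
    have hSeq : S =ᵐ[μ] {x | a x < ‖b x‖} := by
      rw [Filter.eventuallyEq_set]
      filter_upwards [haa', hbb'] with x h1 h2
      simp only [hSdef, Set.mem_setOf_eq, h1, h2]
    rwa [measure_congr hSeq]
  -- integrabilities
  have hbb : Integrable (fun x => ‖b x‖ ^ 2) μ := by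
    have := aux_int hb.norm hb.norm
    simpa [sq] using this
  have hab : Integrable (fun x => a x * ‖b x‖) μ := aux_int ha2 hb.norm
  have hag : Integrable (fun x => a x * ‖g x‖) μ := aux_int ha2 hg.norm
  set I1 : ℝ := ∫ x in S, ‖b x‖ ^ 2 ∂μ with hI1def
  set I2 : ℝ := ∫ x in S, a x * ‖b x‖ ∂μ with hI2def
  set I3 : ℝ := ∫ x, a x * ‖g x‖ ∂μ with hI3def
  set c : ℝ := ∫ x in S, (‖b x‖ ^ 2 - a x * ‖b x‖) ∂μ with hcdef
  have hcI : c = I1 - I2 := integral_sub hbb.integrableOn hab.integrableOn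
  -- positivity of c
  have hc : 0 < c := by
    rw [hcdef, setIntegral_pos_iff_support_of_nonneg_ae]
    · -- 0 < μ (support f ∩ S)
      set f : EuclideanSpace ℝ (Fin n) → ℝ := fun x => ‖b x‖ ^ 2 - a x * ‖b x‖
      have hae : ∀ᵐ x ∂μ, 0 ≤ a x ∧ a x = a' x ∧ b x = b' x := by
        filter_upwards [ha0, haa', hbb'] with x h1 h2 h3 using ⟨h1, h2, h3⟩
      rw [ae_iff] at hae
      have hsub : S ⊆ (support f ∩ S) ∪ {x | ¬(0 ≤ a x ∧ a x = a' x ∧ b x = b' x)} := by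
        intro x hx
        by_cases hP : 0 ≤ a x ∧ a x = a' x ∧ b x = b' x
        · left
          refine ⟨?_, hx⟩
          obtain ⟨h1, h2, h3⟩ := hP
          have hlt : a x < ‖b x‖ := by rw [h2, h3]; exact hx
          have : 0 < ‖b x‖ := lt_of_le_of_lt h1 hlt
          simp only [mem_support, f]
          nlinarith
        · right; exact hP
      have := (measure_mono hsub).trans (measure_union_le (μ := μ) _ _)
      rw [hae, add_zero] at this
      exact lt_of_lt_of_le hSpos this
    · -- nonneg a.e. on restrict
      have hae : ∀ᵐ x ∂μ, 0 ≤ a x ∧ a x = a' x ∧ b x = b' x := by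
        filter_upwards [ha0, haa', hbb'] with x h1 h2 h3 using ⟨h1, h2, h3⟩
      filter_upwards [ae_restrict_of_ae hae, ae_restrict_mem hS] with x hP hx
      obtain ⟨h1, h2, h3⟩ := hP
      have hlt : a x < ‖b x‖ := by rw [h2, h3]; exact hx
      have : 0 < ‖b x‖ := lt_of_le_of_lt h1 hlt
      simp only [Pi.zero_apply]
      nlinarith
    · exact (hbb.sub hab).integrableOn
  set t : ℝ := max 1 ((M + I3 + 1) / c) with htdef
  have ht0 : (0:ℝ) ≤ t := le_trans zero_le_one (le_max_left _ _)
  have htc : M + I3 + 1 ≤ t * c := (div_le_iff₀ hc).mp (le_max_right _ _)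
  set d : EuclideanSpace ℝ (Fin n) → EuclideanSpace ℝ (Fin n) :=
    S.indicator (fun x => t • b x) with hddef
  have hd : MemLp d 2 μ := (hb.const_smul t).indicator hS
  refine ⟨d, hd, ?_⟩
  -- first integral
  have h1 : (fun x => ⟪d x, b x⟫) = S.indicator (fun x => t * ‖b x‖ ^ 2) := by
    funext x
    by_cases hx : x ∈ S
    · simp only [hddef, Set.indicator_of_mem hx, real_inner_smul_left,
        real_inner_self_eq_norm_sq]
    · simp [hddef, Set.indicator_of_notMem hx]
  have hint1 : ∫ x, ⟪d x, b x⟫ ∂μ = t * I1 := by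
    rw [h1, integral_indicator hS, integral_const_mul]
  -- second integral bound
  have hdgL2 : MemLp (fun x => d x + g x) 2 μ := hd.add hg
  have hLHSint : Integrable (fun x => a x * ‖d x + g x‖) μ := aux_int ha2 hdgL2.norm
  set u : EuclideanSpace ℝ (Fin n) → ℝ :=
    fun x => S.indicator (fun y => t * (a y * ‖b y‖)) x + a x * ‖g x‖ with hudef
  have huint : Integrable u μ := ((hab.const_mul t).indicator hS).add hag
  have hbound : ∀ᵐ x ∂μ, a x * ‖d x + g x‖ ≤ u x := by
    filter_upwards [ha0] with x hx
    have hnd : a x * ‖d x‖ = S.indicator (fun y => t * (a y * ‖b y‖)) x := by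
      by_cases hxS : x ∈ S
      · simp only [hddef, Set.indicator_of_mem hxS, norm_smul, Real.norm_eq_abs,
          abs_of_nonneg ht0]
        ring
      · simp [hddef, Set.indicator_of_notMem hxS]
    have htri : ‖d x + g x‖ ≤ ‖d x‖ + ‖g x‖ := norm_add_le _ _
    have : a x * ‖d x + g x‖ ≤ a x * ‖d x‖ + a x * ‖g x‖ := by nlinarith
    rw [hnd] at this
    exact this
  have hint2 : ∫ x, a x * ‖d x + g x‖ ∂μ ≤ t * I2 + I3 := by
    have := integral_mono_ae hLHSint huint hbound
    rwa [hudef, integral_add ((hab.const_mul t).indicator hS) hag,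
      integral_indicator hS, integral_const_mul] at this
  rw [hint1]
  have : t * I1 - (t * I2 + I3) = t * c - I3 := by rw [hcI]; ring
  linarith
end

section
/- Let b ∈ L²(Ω;ℝⁿ) satisfy |b(x)| ≤ a(x) for a.e. x ∈ Ω, and let m : Ω → [0,∞) be a measurable function such that m(x) = 0 for a.e. x with |b(x)| < a(x) and such that the pointwise product m·b belongs to L²(Ω;ℝⁿ). Then p := −g + m·b is a subgradient of F* at b; that is, for every d ∈ L²(Ω;ℝⁿ) with |d(x)| ≤ a(x) a.e., one has −⟨g,d⟩ + ⟨g,b⟩ ≥ ⟨p, d − b⟩. -/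
open MeasureTheory RealInnerProductSpace

lemma memL2_integrable_inner {α : Type*} [MeasurableSpace α] {μ : Measure α}
    {E : Type*} [NormedAddCommGroup E] [InnerProductSpace ℝ E]
    {f g : α → E} (hf : MemLp f 2 μ) (hg : MemLp g 2 μ) :
    Integrable (fun x => ⟪f x, g x⟫) μ := by
  have h := L2.integrable_inner (𝕜 := ℝ) (hf.toLp f) (hg.toLp g)
  refine h.congr ?_
  filter_upwards [hf.coeFn_toLp, hg.coeFn_toLp] with x h1 h2
  rw [h1, h2]

/-- If `|b(x)| ≤ a(x)` a.e. and `m : Ω → [0,∞)` is measurable with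
`m(x) = 0` a.e. on `{|b| < a}` and `m·b ∈ L²(Ω;ℝⁿ)`, then `p := -g + m·b` is a
subgradient of `F*` at `b`: for every `d ∈ L²(Ω;ℝⁿ)` with `|d(x)| ≤ a(x)` a.e.,
`-⟨g,d⟩ + ⟨g,b⟩ ≥ ⟨p, d - b⟩`. -/
theorem stmt_2 {n : ℕ} (hn : 2 ≤ n) (Ω : Set (EuclideanSpace ℝ (Fin n)))
    (hΩopen : IsOpen Ω) (hΩbdd : Bornology.IsBounded Ω)
    (μ : Measure (EuclideanSpace ℝ (Fin n))) (hμ : μ = volume.restrict Ω)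
    (a : EuclideanSpace ℝ (Fin n) → ℝ) (ha2 : MemLp a 2 μ) (ha0 : ∀ᵐ x ∂μ, 0 ≤ a x)
    (g : EuclideanSpace ℝ (Fin n) → EuclideanSpace ℝ (Fin n)) (hg : MemLp g 2 μ)
    (b : EuclideanSpace ℝ (Fin n) → EuclideanSpace ℝ (Fin n)) (hb : MemLp b 2 μ)
    (hba : ∀ᵐ x ∂μ, ‖b x‖ ≤ a x)
    (m : EuclideanSpace ℝ (Fin n) → ℝ) (hm : Measurable m) (hm0 : ∀ x, 0 ≤ m x)
    (hmb : ∀ᵐ x ∂μ, ‖b x‖ < a x → m x = 0)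
    (hmbL2 : MemLp (fun x => m x • b x) 2 μ)
    (p : EuclideanSpace ℝ (Fin n) → EuclideanSpace ℝ (Fin n))
    (hp : ∀ x, p x = -g x + m x • b x) :
    ∀ d : EuclideanSpace ℝ (Fin n) → EuclideanSpace ℝ (Fin n),
      MemLp d 2 μ → (∀ᵐ x ∂μ, ‖d x‖ ≤ a x) →
      (∫ x, ⟪p x, d x - b x⟫ ∂μ) ≤
        -(∫ x, ⟪g x, d x⟫ ∂μ) + ∫ x, ⟪g x, b x⟫ ∂μ := by
  intro d hd hda
  have hgd : Integrable (fun x => ⟪g x, d x⟫) μ := memL2_integrable_inner hg hd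
  have hgb : Integrable (fun x => ⟪g x, b x⟫) μ := memL2_integrable_inner hg hb
  have hmbd : Integrable (fun x => ⟪m x • b x, d x⟫) μ := memL2_integrable_inner hmbL2 hd
  have hmbb : Integrable (fun x => ⟪m x • b x, b x⟫) μ := memL2_integrable_inner hmbL2 hb
  have hsplit : (fun x => ⟪p x, d x - b x⟫) =
      fun x => (⟪g x, b x⟫ - ⟪g x, d x⟫) + (⟪m x • b x, d x⟫ - ⟪m x • b x, b x⟫) := by
    funext x
    rw [hp x]
    simp [inner_sub_right, inner_add_left, inner_neg_left]
    ring
  have h1 : Integrable (fun x => ⟪g x, b x⟫ - ⟪g x, d x⟫) μ := hgb.sub hgd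
  have h2 : Integrable (fun x => ⟪m x • b x, d x⟫ - ⟪m x • b x, b x⟫) μ := hmbd.sub hmbb
  rw [hsplit, integral_add h1 h2, integral_sub hgb hgd, integral_sub hmbd hmbb]
  have hle : (∫ x, ⟪m x • b x, d x⟫ ∂μ) - (∫ x, ⟪m x • b x, b x⟫ ∂μ) ≤ 0 := by
    rw [← integral_sub hmbd hmbb]
    apply integral_nonpos_of_ae
    filter_upwards [hba, hda, hmb, ha0] with x h1 h2 h3 h4
    simp only [Pi.zero_apply]
    rcases lt_or_eq_of_le h1 with h | h
    · simp [h3 h]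
    · have : ⟪m x • b x, d x⟫ ≤ m x * (a x * a x) := by
        rw [real_inner_smul_left]
        calc m x * ⟪b x, d x⟫ ≤ m x * (‖b x‖ * ‖d x‖) :=
              mul_le_mul_of_nonneg_left (real_inner_le_norm _ _) (hm0 x)
          _ ≤ m x * (a x * a x) := by
              apply mul_le_mul_of_nonneg_left _ (hm0 x)
              exact mul_le_mul h1 h2 (norm_nonneg _) h4
      have h2' : ⟪m x • b x, b x⟫ = m x * (a x * a x) := by
        rw [real_inner_smul_left, real_inner_self_eq_norm_mul_norm, h]
      linarith
  linarith
end

section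
/- Let a ∈ L²(Ω) be nonnegative, let v ∈ L²(Ω;ℝⁿ), and let b₁, b₂ ∈ L²(Ω;ℝⁿ) be such that for i = 1,2 one has |b_i(x)| ≤ a(x) for a.e. x ∈ Ω and ∫_Ω a(x)|v(x)| dx = ∫_Ω b_i(x)·v(x) dx. Then b₁(x) = b₂(x) for a.e. x in the set {x ∈ Ω : v(x) ≠ 0 or a(x) = 0}; equivalently, b₁ ≡ b₂ on Ω ∖ {x : v(x) = 0 and a(x) ≠ 0}. -/
open MeasureTheory RealInnerProductSpace

/-- partial uniqueness for the dual problem: If `b₁, b₂` both satisfy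
`|bᵢ(x)| ≤ a(x)` a.e. and `∫ a|v| = ∫ bᵢ·v`, then `b₁ = b₂` a.e. on the set
`{x : v(x) ≠ 0 or a(x) = 0}`, i.e. on `Ω ∖ {x : v(x) = 0 and a(x) ≠ 0}`. -/
theorem stmt_5 {n : ℕ} (hn : 2 ≤ n) (Ω : Set (EuclideanSpace ℝ (Fin n)))
    (hΩopen : IsOpen Ω) (hΩbdd : Bornology.IsBounded Ω)
    (μ : Measure (EuclideanSpace ℝ (Fin n))) (hμ : μ = volume.restrict Ω)
    (a : EuclideanSpace ℝ (Fin n) → ℝ) (ha2 : MemLp a 2 μ) (ha0 : ∀ᵐ x ∂μ, 0 ≤ a x)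
    (v b₁ b₂ : EuclideanSpace ℝ (Fin n) → EuclideanSpace ℝ (Fin n))
    (hv : MemLp v 2 μ) (hb₁ : MemLp b₁ 2 μ) (hb₂ : MemLp b₂ 2 μ)
    (hba₁ : ∀ᵐ x ∂μ, ‖b₁ x‖ ≤ a x) (hba₂ : ∀ᵐ x ∂μ, ‖b₂ x‖ ≤ a x)
    (heq₁ : ∫ x, a x * ‖v x‖ ∂μ = ∫ x, ⟪b₁ x, v x⟫ ∂μ)
    (heq₂ : ∫ x, a x * ‖v x‖ ∂μ = ∫ x, ⟪b₂ x, v x⟫ ∂μ) :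
    ∀ᵐ x ∂μ, (v x ≠ 0 ∨ a x = 0) → b₁ x = b₂ x := by
  -- integrability of a‖v‖
  have hI : Integrable (fun x => a x * ‖v x‖) μ := by
    have h := ha2.smul (r := 1) hv.norm (hpqr := ⟨by simp [ENNReal.inv_two_add_inv_two]⟩)
    exact (memLp_one_iff_integrable.mp h).congr
      (Filter.Eventually.of_forall fun x => by simp [smul_eq_mul, mul_comm])
  -- integrability of ⟪bᵢ, v⟫
  have hinner : ∀ b : EuclideanSpace ℝ (Fin n) → EuclideanSpace ℝ (Fin n),
      MemLp b 2 μ → (∀ᵐ x ∂μ, ‖b x‖ ≤ a x) → Integrable (fun x => ⟪b x, v x⟫) μ := by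
    intro b hb hba
    refine hI.mono' (hb.1.inner hv.1) ?_
    filter_upwards [hba] with x hx
    calc ‖⟪b x, v x⟫‖ = |⟪b x, v x⟫| := rfl
      _ ≤ ‖b x‖ * ‖v x‖ := abs_real_inner_le_norm _ _
      _ ≤ a x * ‖v x‖ := by
          exact mul_le_mul_of_nonneg_right hx (norm_nonneg _)
  -- key: for each b, a.e. ⟪b x, v x⟫ = a x * ‖v x‖
  have key : ∀ b : EuclideanSpace ℝ (Fin n) → EuclideanSpace ℝ (Fin n),
      MemLp b 2 μ → (∀ᵐ x ∂μ, ‖b x‖ ≤ a x) →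
      (∫ x, a x * ‖v x‖ ∂μ = ∫ x, ⟪b x, v x⟫ ∂μ) →
      ∀ᵐ x ∂μ, a x * ‖v x‖ - ⟪b x, v x⟫ = 0 := by
    intro b hb hba heq
    have hIb := hinner b hb hba
    have hsub : Integrable (fun x => a x * ‖v x‖ - ⟪b x, v x⟫) μ := hI.sub hIb
    have hnn : 0 ≤ᵐ[μ] fun x => a x * ‖v x‖ - ⟪b x, v x⟫ := by
      filter_upwards [hba] with x hx
      have : ⟪b x, v x⟫ ≤ a x * ‖v x‖ :=
        (real_inner_le_norm _ _).trans (mul_le_mul_of_nonneg_right hx (norm_nonneg _))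
      simpa using this
    have hzero : ∫ x, (a x * ‖v x‖ - ⟪b x, v x⟫) ∂μ = 0 := by
      rw [integral_sub hI hIb, heq, sub_self]
    exact (integral_eq_zero_iff_of_nonneg_ae hnn hsub).mp hzero
  filter_upwards [key b₁ hb₁ hba₁ heq₁, key b₂ hb₂ hba₂ heq₂, hba₁, hba₂, ha0]
    with x h₁ h₂ hx₁ hx₂ hx0 hor
  have e₁ : ⟪b₁ x, v x⟫ = a x * ‖v x‖ := by linarith
  have e₂ : ⟪b₂ x, v x⟫ = a x * ‖v x‖ := by linarith
  rcases hor with hv0 | ha0x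
  · -- v x ≠ 0
    have hvn : (0 : ℝ) < ‖v x‖ := norm_pos_iff.mpr hv0
    have eq : ∀ b : EuclideanSpace ℝ (Fin n), ‖b‖ ≤ a x → ⟪b, v x⟫ = a x * ‖v x‖ →
        ‖v x‖ • b = a x • v x := by
      intro b hba' hbe
      have hnb : ‖b‖ = a x := by
        have h1 : ⟪b, v x⟫ ≤ ‖b‖ * ‖v x‖ := real_inner_le_norm _ _
        nlinarith [real_inner_le_norm b (v x), norm_nonneg b]
      have : ⟪b, v x⟫ = ‖b‖ * ‖v x‖ := by rw [hnb]; exact hbe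
      have := inner_eq_norm_mul_iff_real.mp this
      rwa [hnb] at this
    have E₁ := eq (b₁ x) hx₁ e₁
    have E₂ := eq (b₂ x) hx₂ e₂
    have : ‖v x‖ • b₁ x = ‖v x‖ • b₂ x := E₁.trans E₂.symm
    exact smul_right_injective _ hvn.ne' this
  · -- a x = 0
    have h1 : b₁ x = 0 := norm_le_zero_iff.mp (ha0x ▸ hx₁)
    have h2 : b₂ x = 0 := norm_le_zero_iff.mp (ha0x ▸ hx₂)
    rw [h1, h2]
end

section
/- Let α ≥ 0 and λ > 0 be real numbers and let c be a vector in ℝⁿ (with the Euclidean norm). Define z* := max(|c| − α/λ, 0) · c/|c| if c ≠ 0, and z* := 0 if c = 0. Then z* is the unique minimizer over ℝⁿ of the function z ↦ α|z| + (λ/2)|c − z|²; that is, for every z ∈ ℝⁿ one has α|z*| + (λ/2)|c − z*|² ≤ α|z| + (λ/2)|c − z|², with equality only when z = z*. -/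
open Classical in

/-- pointwise shrinkage/soft-thresholding: For `α ≥ 0`, `λ > 0` and
`c ∈ ℝⁿ`, the vector `z* = max(|c| - α/λ, 0) · c/|c|` (with `z* = 0` if `c = 0`)
is the unique minimizer over `ℝⁿ` of `z ↦ α|z| + (λ/2)|c - z|²`. -/
theorem stmt_7 {n : ℕ} (α lam : ℝ) (hα : 0 ≤ α) (hlam : 0 < lam)
    (c zstar : EuclideanSpace ℝ (Fin n))
    (hz : zstar = if c = 0 then 0 else ((max (‖c‖ - α / lam) 0) / ‖c‖) • c) :
    ∀ z : EuclideanSpace ℝ (Fin n),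
      (α * ‖zstar‖ + lam / 2 * ‖c - zstar‖ ^ 2 ≤ α * ‖z‖ + lam / 2 * ‖c - z‖ ^ 2) ∧
      (α * ‖z‖ + lam / 2 * ‖c - z‖ ^ 2 = α * ‖zstar‖ + lam / 2 * ‖c - zstar‖ ^ 2 →
        z = zstar) := by
  intro z
  by_cases hc : c = 0
  · subst hc
    rw [if_pos rfl] at hz
    subst hz
    simp only [norm_zero, zero_sub, norm_neg, sub_zero, mul_zero, add_zero]
    constructor
    · nlinarith [mul_nonneg hα (norm_nonneg z), mul_nonneg hlam.le (sq_nonneg ‖z‖)]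
    · intro h
      have h2 : lam / 2 * ‖z‖ ^ 2 ≤ 0 := by nlinarith [mul_nonneg hα (norm_nonneg z)]
      have h3 : ‖z‖ ^ 2 = 0 := by nlinarith [sq_nonneg ‖z‖]
      have hz0 : ‖z‖ = 0 := by
        have := pow_eq_zero_iff (n := 2) (by norm_num) |>.mp h3
        exact this
      exact norm_eq_zero.mp hz0
  · rw [if_neg hc] at hz
    set t : ℝ := max (‖c‖ - α / lam) 0 with ht
    have hcpos : (0:ℝ) < ‖c‖ := norm_pos_iff.mpr hc
    have ht0 : 0 ≤ t := le_max_right _ _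
    have ht1 : ‖c‖ - α / lam ≤ t := le_max_left _ _
    have hβ : lam * (α / lam) = α := by field_simp
    have ht1' : lam * ‖c‖ - α ≤ lam * t := by
      have h := mul_le_mul_of_nonneg_left ht1 hlam.le
      linarith [hβ, h]
    have h3' : (lam * t - lam * ‖c‖ + α) * t = 0 := by
      rcases le_total (‖c‖ - α / lam) 0 with h | h
      · rw [ht, max_eq_right h]; ring
      · rw [ht, max_eq_left h]
        linear_combination (α / lam - ‖c‖) * hβ
    have hzs : ‖zstar‖ = t := by
      rw [hz, norm_smul, Real.norm_eq_abs, abs_of_nonneg (div_nonneg ht0 hcpos.le),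
        div_mul_cancel₀ _ hcpos.ne']
    have htc : t ≤ ‖c‖ := max_le (sub_le_self _ (div_nonneg hα hlam.le)) hcpos.le
    have hczs : ‖c - zstar‖ = ‖c‖ - t := by
      have e1 : c - zstar = (1 - t / ‖c‖) • c := by
        rw [hz, sub_smul, one_smul]
      have e2 : (1 : ℝ) - t / ‖c‖ = (‖c‖ - t) / ‖c‖ := by field_simp
      rw [e1, e2, norm_smul, Real.norm_eq_abs,
        abs_of_nonneg (div_nonneg (by linarith) hcpos.le), div_mul_cancel₀ _ hcpos.ne']
    rw [hzs, hczs]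
    have h1 : ‖c - z‖ ^ 2 = ‖c‖ ^ 2 - 2 * (inner ℝ c z : ℝ) + ‖z‖ ^ 2 := norm_sub_sq_real c z
    have h2 : (inner ℝ c z : ℝ) ≤ ‖c‖ * ‖z‖ := real_inner_le_norm c z
    have hs0 : (0:ℝ) ≤ ‖z‖ := norm_nonneg z
    have hC : (0:ℝ) ≤ ‖z‖ * (lam * t - lam * ‖c‖ + α) :=
      mul_nonneg hs0 (by linarith)
    have hA : (0:ℝ) ≤ lam / 2 * (‖z‖ - t) ^ 2 := by positivity
    have hB : (0:ℝ) ≤ lam * (‖c‖ * ‖z‖ - (inner ℝ c z : ℝ)) :=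
      mul_nonneg hlam.le (by linarith)
    constructor
    · nlinarith [h1, h3', hA, hB, hC]
    · intro heq
      have hsq : (‖z‖ - t) ^ 2 ≤ 0 := by nlinarith [h1, h3', hB, hC, heq]
      have hst : ‖z‖ = t := by
        have h4 := le_antisymm hsq (sq_nonneg _)
        have h5 := pow_eq_zero_iff (n := 2) (by norm_num) |>.mp h4
        linarith
      have hB0 : (inner ℝ c z : ℝ) = ‖c‖ * ‖z‖ := by
        rw [hst] at heq h1
        have h6 : lam / 2 * ‖c - z‖ ^ 2 = lam / 2 * (‖c‖ - t) ^ 2 := by linarith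
        have h7 : ‖c - z‖ ^ 2 = (‖c‖ - t) ^ 2 :=
          mul_left_cancel₀ (ne_of_gt (by positivity : (0:ℝ) < lam / 2)) h6
        rw [hst]
        linarith [h7, h1, sq_nonneg (‖c‖ - t)]
      have hcz : ‖z‖ • c = ‖c‖ • z := inner_eq_norm_mul_iff_real.mp hB0
      have hzz : z = (‖z‖ / ‖c‖) • c := by
        have h4 := congrArg (fun v : EuclideanSpace ℝ (Fin n) => (‖c‖⁻¹ : ℝ) • v) hcz
        simp only [smul_smul, inv_mul_cancel₀ hcpos.ne', one_smul] at h4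
        rw [show ‖z‖ / ‖c‖ = ‖c‖⁻¹ * ‖z‖ by ring]
        exact h4.symm
      rw [hzz, hst, hz]
end

section
/- Let a ∈ L²(Ω) be nonnegative, g, c ∈ L²(Ω;ℝⁿ), and λ > 0. Define d* ∈ L²(Ω;ℝⁿ) pointwise by d*(x) := max(|c(x)+g(x)| − a(x)/λ, 0) · (c(x)+g(x))/|c(x)+g(x)| − g(x) when c(x)+g(x) ≠ 0, and d*(x) := −g(x) when c(x)+g(x) = 0. Then d* belongs to L²(Ω;ℝⁿ) and is the unique minimizer over L²(Ω;ℝⁿ) of the functional I(d) := ∫_Ω a(x)|d(x)+g(x)| dx + (λ/2)‖c − d‖², where ‖·‖ is the L²(Ω;ℝⁿ) norm. -/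
open MeasureTheory RealInnerProductSpace

private lemma shrink_key {E : Type*} [NormedAddCommGroup E] [InnerProductSpace ℝ E]
    (a lam : ℝ) (ha : 0 ≤ a) (hlam : 0 < lam) (w u : E) :
    a * ‖(max (‖w‖ - a / lam) 0 / ‖w‖) • w‖
      + lam / 2 * ‖w - (max (‖w‖ - a / lam) 0 / ‖w‖) • w‖ ^ 2
      + lam / 2 * ‖u - (max (‖w‖ - a / lam) 0 / ‖w‖) • w‖ ^ 2
    ≤ a * ‖u‖ + lam / 2 * ‖w - u‖ ^ 2 := by
  rcases le_or_gt (lam * ‖w‖) a with hcase | hcase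
  · have hmax : max (‖w‖ - a / lam) 0 = 0 := max_eq_right (by
      rw [sub_nonpos, le_div_iff₀ hlam]; linarith)
    simp only [hmax, zero_div, zero_smul, norm_zero, mul_zero, sub_zero, zero_add]
    nlinarith [norm_sub_sq_real w u, real_inner_le_norm w u, norm_nonneg u, norm_nonneg w,
      mul_le_mul_of_nonneg_right hcase (norm_nonneg u),
      mul_le_mul_of_nonneg_left (real_inner_le_norm w u) hlam.le]
  · have hw : 0 < ‖w‖ := by nlinarith [norm_nonneg w]
    obtain ⟨t, ht0, ht1, hust, ha'⟩ :
        ∃ t : ℝ, 0 ≤ t ∧ t ≤ 1 ∧ max (‖w‖ - a / lam) 0 / ‖w‖ = t ∧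
          a = lam * (‖w‖ - t * ‖w‖) := by
      refine ⟨(‖w‖ - a / lam) / ‖w‖, ?_, ?_, ?_, ?_⟩
      · have : 0 ≤ ‖w‖ - a / lam := by
          rw [sub_nonneg, div_le_iff₀ hlam]; nlinarith
        positivity
      · rw [div_le_one hw]; have := div_nonneg ha hlam.le; linarith
      · rw [max_eq_left]; rw [sub_nonneg, div_le_iff₀ hlam]; nlinarith
      · field_simp; ring
    rw [hust, ha']
    have h1 : ‖t • w‖ = t * ‖w‖ := by
      rw [norm_smul, Real.norm_eq_abs, abs_of_nonneg ht0]
    have h2 : w - t • w = (1 - t) • w := by rw [sub_smul, one_smul]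
    have h3 : ‖(1 - t) • w‖ = (1 - t) * ‖w‖ := by
      rw [norm_smul, Real.norm_eq_abs, abs_of_nonneg (by linarith)]
    have h4 : ‖u - t • w‖ ^ 2 = ‖u‖ ^ 2 - 2 * (t * ⟪u, w⟫) + (t * ‖w‖) ^ 2 := by
      rw [norm_sub_sq_real, real_inner_smul_right, h1]
    have h5 : ‖w - u‖ ^ 2 = ‖w‖ ^ 2 - 2 * ⟪w, u⟫ + ‖u‖ ^ 2 := norm_sub_sq_real w u
    have h6 : ⟪u, w⟫ = ⟪w, u⟫ := real_inner_comm w u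
    have h7 : ⟪w, u⟫ ≤ ‖w‖ * ‖u‖ := real_inner_le_norm w u
    rw [h1, h2, h3, h4, h5, h6]
    nlinarith [mul_nonneg (mul_nonneg hlam.le (sub_nonneg.2 ht1))
      (sub_nonneg.2 h7), norm_nonneg u, norm_nonneg w]

open Classical in
/-- shrinkage solution of the d-update step: With
`d*(x) = max(|c+g| - a/λ, 0)·(c+g)/|c+g| - g` (and `d* = -g` where `c+g = 0`),
`d*` lies in `L²(Ω;ℝⁿ)` and is the unique (up to a.e. equality) minimizer over
`L²(Ω;ℝⁿ)` of `I(d) = ∫ a|d+g| + (λ/2)‖c - d‖²`. -/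
theorem stmt_8 {n : ℕ} (hn : 2 ≤ n) (Ω : Set (EuclideanSpace ℝ (Fin n)))
    (hΩopen : IsOpen Ω) (hΩbdd : Bornology.IsBounded Ω)
    (μ : Measure (EuclideanSpace ℝ (Fin n))) (hμ : μ = volume.restrict Ω)
    (a : EuclideanSpace ℝ (Fin n) → ℝ) (ha2 : MemLp a 2 μ) (ha0 : ∀ᵐ x ∂μ, 0 ≤ a x)
    (g c : EuclideanSpace ℝ (Fin n) → EuclideanSpace ℝ (Fin n))
    (hg : MemLp g 2 μ) (hc : MemLp c 2 μ)
    (lam : ℝ) (hlam : 0 < lam)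
    (dstar : EuclideanSpace ℝ (Fin n) → EuclideanSpace ℝ (Fin n))
    (hdstar : ∀ x, dstar x =
      if c x + g x = 0 then -g x
      else ((max (‖c x + g x‖ - a x / lam) 0) / ‖c x + g x‖) • (c x + g x) - g x)
    (I : (EuclideanSpace ℝ (Fin n) → EuclideanSpace ℝ (Fin n)) → ℝ)
    (hI : ∀ d, I d = (∫ x, a x * ‖d x + g x‖ ∂μ) + lam / 2 * ∫ x, ‖c x - d x‖ ^ 2 ∂μ) :
    MemLp dstar 2 μ ∧
    (∀ d, MemLp d 2 μ → I dstar ≤ I d) ∧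
    (∀ d, MemLp d 2 μ → I d = I dstar → d =ᵐ[μ] dstar) := by
  -- the if-then-else can be collapsed into one formula
  have hds : ∀ x, dstar x =
      (max (‖c x + g x‖ - a x / lam) 0 / ‖c x + g x‖) • (c x + g x) - g x := by
    intro x
    rw [hdstar x]
    split_ifs with h
    · rw [h]; simp
    · rfl
  have hw : MemLp (fun x => c x + g x) 2 μ := hc.add hg
  -- measurability of dstar
  have hF : Measurable fun p : ℝ × EuclideanSpace ℝ (Fin n) =>
      (max (‖p.2‖ - p.1 / lam) 0 / ‖p.2‖) • p.2 := by
    apply Measurable.fun_smul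
    · exact ((measurable_snd.norm.sub (measurable_fst.div_const lam)).max
        measurable_const).div measurable_snd.norm
    · exact measurable_snd
  have hmeas : AEStronglyMeasurable dstar μ := by
    have h1 : AEMeasurable (fun x => (a x, c x + g x)) μ :=
      ha2.1.aemeasurable.prodMk hw.1.aemeasurable
    have h2 := (hF.comp_aemeasurable h1).sub hg.1.aemeasurable
    have h3 : dstar = fun x =>
        (max (‖c x + g x‖ - a x / lam) 0 / ‖c x + g x‖) • (c x + g x) - g x :=
      funext hds
    rw [h3]
    exact h2.aestronglyMeasurable
  -- dstar is in L²
  have hmem : MemLp dstar 2 μ := by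
    refine MemLp.of_le (hw.norm.add hg.norm) hmeas ?_
    filter_upwards [ha0] with x hx
    rw [hds x]
    have hb : ‖(max (‖c x + g x‖ - a x / lam) 0 / ‖c x + g x‖) • (c x + g x)‖
        ≤ ‖c x + g x‖ := by
      rw [norm_smul, Real.norm_eq_abs, abs_of_nonneg (by positivity)]
      rcases eq_or_ne (c x + g x) 0 with h | h
      · simp [h]
      · have hpos : 0 < ‖c x + g x‖ := norm_pos_iff.2 h
        rw [div_mul_cancel₀ _ hpos.ne']
        have h2 : 0 ≤ a x / lam := by positivity
        exact max_le (by linarith) hpos.le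
    calc ‖(max (‖c x + g x‖ - a x / lam) 0 / ‖c x + g x‖) • (c x + g x) - g x‖
        ≤ ‖(max (‖c x + g x‖ - a x / lam) 0 / ‖c x + g x‖) • (c x + g x)‖ + ‖g x‖ :=
          norm_sub_le _ _
      _ ≤ ‖c x + g x‖ + ‖g x‖ := by linarith
      _ ≤ ‖‖c x + g x‖ + ‖g x‖‖ := le_abs_self _
  -- integrability helpers
  have int_sq : ∀ {f : EuclideanSpace ℝ (Fin n) → EuclideanSpace ℝ (Fin n)},
      MemLp f 2 μ → Integrable (fun x => ‖f x‖ ^ 2) μ := fun hf => hf.norm.integrable_sq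
  have int_mul : ∀ {f : EuclideanSpace ℝ (Fin n) → EuclideanSpace ℝ (Fin n)},
      MemLp f 2 μ → Integrable (fun x => a x * ‖f x‖) μ := by
    intro f hf
    refine Integrable.mono' ((ha2.integrable_sq.add (int_sq hf)).div_const 2)
      (ha2.1.mul hf.1.norm) ?_
    refine Filter.Eventually.of_forall fun x => ?_
    simp only [Pi.add_apply]
    rw [Real.norm_eq_abs, abs_mul, abs_norm]
    nlinarith [sq_nonneg (|a x| - ‖f x‖), sq_abs (a x), abs_nonneg (a x), norm_nonneg (f x)]
  have intA : ∀ d : EuclideanSpace ℝ (Fin n) → EuclideanSpace ℝ (Fin n), MemLp d 2 μ →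
      Integrable (fun x => a x * ‖d x + g x‖) μ := fun d hd => int_mul (hd.add hg)
  have intB : ∀ d : EuclideanSpace ℝ (Fin n) → EuclideanSpace ℝ (Fin n), MemLp d 2 μ →
      Integrable (fun x => ‖c x - d x‖ ^ 2) μ := fun d hd => int_sq (hc.sub hd)
  have intC : ∀ d : EuclideanSpace ℝ (Fin n) → EuclideanSpace ℝ (Fin n), MemLp d 2 μ →
      Integrable (fun x => ‖d x - dstar x‖ ^ 2) μ := fun d hd => int_sq (hd.sub hmem)
  -- I as a single integral
  have hIeq : ∀ d, MemLp d 2 μ → I d =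
      ∫ x, (a x * ‖d x + g x‖ + lam / 2 * ‖c x - d x‖ ^ 2) ∂μ := by
    intro d hd
    rw [hI d, ← integral_const_mul,
      ← integral_add (intA d hd) ((intB d hd).const_mul (lam / 2))]
  -- main inequality
  have main : ∀ d, MemLp d 2 μ →
      I dstar + lam / 2 * ∫ x, ‖d x - dstar x‖ ^ 2 ∂μ ≤ I d := by
    intro d hd
    rw [hIeq d hd, hIeq dstar hmem, ← integral_const_mul]
    have h1 : Integrable (fun x => a x * ‖dstar x + g x‖ + lam / 2 * ‖c x - dstar x‖ ^ 2) μ :=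
      (intA dstar hmem).add ((intB dstar hmem).const_mul (lam / 2))
    have h3 : Integrable (fun x => lam / 2 * ‖d x - dstar x‖ ^ 2) μ :=
      (intC d hd).const_mul (lam / 2)
    have h2 : Integrable (fun x => a x * ‖d x + g x‖ + lam / 2 * ‖c x - d x‖ ^ 2) μ :=
      (intA d hd).add ((intB d hd).const_mul (lam / 2))
    rw [← integral_add h1 h3]
    refine integral_mono_ae (h1.add h3) h2 ?_
    filter_upwards [ha0] with x hx
    rw [hds x]
    have e1 : (max (‖c x + g x‖ - a x / lam) 0 / ‖c x + g x‖) • (c x + g x) - g x + g x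
        = (max (‖c x + g x‖ - a x / lam) 0 / ‖c x + g x‖) • (c x + g x) := by abel
    have e2 : c x - ((max (‖c x + g x‖ - a x / lam) 0 / ‖c x + g x‖) • (c x + g x) - g x)
        = (c x + g x) - (max (‖c x + g x‖ - a x / lam) 0 / ‖c x + g x‖) • (c x + g x) := by
      abel
    have e3 : d x - ((max (‖c x + g x‖ - a x / lam) 0 / ‖c x + g x‖) • (c x + g x) - g x)
        = (d x + g x) - (max (‖c x + g x‖ - a x / lam) 0 / ‖c x + g x‖) • (c x + g x) := by
      abel
    have e4 : c x - d x = (c x + g x) - (d x + g x) := by abel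
    rw [e1, e2, e3, e4]
    exact shrink_key (a x) lam hx hlam (c x + g x) (d x + g x)
  refine ⟨hmem, fun d hd => ?_, fun d hd heq => ?_⟩
  · have h := main d hd
    have h0 : 0 ≤ ∫ x, ‖d x - dstar x‖ ^ 2 ∂μ :=
      integral_nonneg fun x => by positivity
    nlinarith
  · have h := main d hd
    have h0 : 0 ≤ ∫ x, ‖d x - dstar x‖ ^ 2 ∂μ :=
      integral_nonneg fun x => by positivity
    have hz : ∫ x, ‖d x - dstar x‖ ^ 2 ∂μ = 0 := by nlinarith
    have hz2 : (fun x => ‖d x - dstar x‖ ^ 2) =ᵐ[μ] 0 :=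
      (integral_eq_zero_iff_of_nonneg (fun x => by positivity)
        (intC d hd)).1 hz
    filter_upwards [hz2] with x hx
    have : ‖d x - dstar x‖ ^ 2 = 0 := hx
    have := pow_eq_zero_iff (n := 2) (by norm_num) |>.1 this
    rw [norm_eq_zero, sub_eq_zero] at this
    exact this
end

section
/- Let H be a real Hilbert space, λ > 0, and let A, B : H → Set(H) be maximal monotone set-valued operators. Let J_{λA}, J_{λB} : H → H be their resolvents, i.e. for every x ∈ H, x − J_{λA}(x) ∈ λ·A(J_{λA}(x)) and x − J_{λB}(x) ∈ λ·B(J_{λB}(x)). Assume there exists z ∈ H with 0 ∈ A(z) + B(z), i.e. there exists w ∈ A(z) with −w ∈ B(z). Given any x₀, p₀ ∈ H, define for k ≥ 0: x_{k+1} = J_{λA}(2 p_k − x_k) + x_k − p_k and p_{k+1} = J_{λB}(x_{k+1}). Then there exist x̂, p̂ ∈ H such that x_k converges weakly to x̂ (i.e. ⟨x_k, w⟩ → ⟨x̂, w⟩ for every w ∈ H) and p_k converges weakly to p̂; moreover p̂ = J_{λB}(x̂) and 0 ∈ A(p̂) + B(p̂). -/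
open RealInnerProductSpace Filter Topology

/-- A set-valued operator on a real Hilbert space is monotone if
`⟨x₁ - x₂, y₁ - y₂⟩ ≥ 0` whenever `y₁ ∈ A x₁`, `y₂ ∈ A x₂`. -/
def IsMonotoneOp {H : Type*} [NormedAddCommGroup H] [InnerProductSpace ℝ H]
    (A : H → Set H) : Prop :=
  ∀ x₁ x₂ y₁ y₂ : H, y₁ ∈ A x₁ → y₂ ∈ A x₂ → 0 ≤ ⟪x₁ - x₂, y₁ - y₂⟫

/-- A monotone operator is maximal monotone if its graph is not properly contained
in the graph of any monotone operator; equivalently, any pair `(x, y)` monotonically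
related to the graph of `A` belongs to the graph of `A`. -/
def IsMaximalMonotoneOp {H : Type*} [NormedAddCommGroup H] [InnerProductSpace ℝ H]
    (A : H → Set H) : Prop :=
  IsMonotoneOp A ∧
    ∀ x y : H, (∀ x' y' : H, y' ∈ A x' → 0 ≤ ⟪x - x', y - y'⟫) → y ∈ A x

section aux

variable {H : Type*} [NormedAddCommGroup H] [InnerProductSpace ℝ H]

lemma exists_ultra_weak_limit' [CompleteSpace H] (U : Ultrafilter ℕ) (y : ℕ → H) (R : ℝ)
    (hR : ∀ k, ‖y k‖ ≤ R) :
    ∃ yb : H, ∀ w : H, Tendsto (fun k => ⟪y k, w⟫) (U : Filter ℕ) (𝓝 ⟪yb, w⟫) := by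
  have h1 : ∀ w : H, ∃ c : ℝ, Tendsto (fun k => ⟪y k, w⟫) (U : Filter ℕ) (𝓝 c) := by
    intro w
    have hmem : ∀ k, ⟪y k, w⟫ ∈ Set.Icc (-(R * ‖w‖)) (R * ‖w‖) := by
      intro k
      have h := abs_real_inner_le_norm (y k) w
      have h2 : ‖y k‖ * ‖w‖ ≤ R * ‖w‖ :=
        mul_le_mul_of_nonneg_right (hR k) (norm_nonneg w)
      constructor <;> [linarith [neg_abs_le (⟪y k, w⟫)]; linarith [le_abs_self (⟪y k, w⟫)]]
    obtain ⟨c, -, hc⟩ := (isCompact_Icc (a := -(R * ‖w‖)) (b := R * ‖w‖)).ultrafilter_le_nhds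
      (U.map fun k => ⟪y k, w⟫)
      (by rw [Ultrafilter.coe_map, le_principal_iff, mem_map]; exact Eventually.of_forall hmem)
    exact ⟨c, by rwa [Ultrafilter.coe_map] at hc⟩
  choose c hc using h1
  have hadd : ∀ w₁ w₂ : H, c (w₁ + w₂) = c w₁ + c w₂ := by
    intro w₁ w₂
    refine tendsto_nhds_unique (hc (w₁ + w₂)) ?_
    have := (hc w₁).add (hc w₂)
    simpa [inner_add_right] using this
  have hsmul : ∀ (r : ℝ) (w : H), c (r • w) = r * c w := by
    intro r w
    refine tendsto_nhds_unique (hc (r • w)) ?_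
    have := (hc w).const_mul r
    simpa [real_inner_smul_right] using this
  have hbdd : ∀ w : H, ‖c w‖ ≤ R * ‖w‖ := by
    intro w
    have : Tendsto (fun k => |⟪y k, w⟫|) (U : Filter ℕ) (𝓝 |c w|) := (hc w).abs
    refine le_of_tendsto this (Eventually.of_forall fun k => ?_)
    calc |⟪y k, w⟫| ≤ ‖y k‖ * ‖w‖ := abs_real_inner_le_norm _ _
      _ ≤ R * ‖w‖ := mul_le_mul_of_nonneg_right (hR k) (norm_nonneg w)
  let φ : H →ₗ[ℝ] ℝ :=
    { toFun := c
      map_add' := hadd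
      map_smul' := hsmul }
  let φC : H →L[ℝ] ℝ := LinearMap.mkContinuous φ R hbdd
  refine ⟨(InnerProductSpace.toDual ℝ H).symm φC, fun w => ?_⟩
  have : ⟪(InnerProductSpace.toDual ℝ H).symm φC, w⟫ = φC w := by
    rw [← InnerProductSpace.toDual_apply_apply, LinearIsometryEquiv.apply_symm_apply]
  rw [this]
  exact hc w

lemma resolvent_unique' {lam : ℝ} (hlam : 0 < lam)
    {Op : H → Set H} (hmono : IsMonotoneOp Op) {J : H → H}
    (hJ : ∀ x : H, ∃ w ∈ Op (J x), x - J x = lam • w)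
    (X u b : H) (hb : b ∈ Op u) (heq : X - u = lam • b) : J X = u := by
  obtain ⟨w', hw', heq'⟩ := hJ X
  have hmono' := hmono (J X) u w' b hw' hb
  have hkey : lam • (w' - b) = u - J X := by
    rw [smul_sub, ← heq', ← heq]; abel
  have h2 : ⟪J X - u, lam • (w' - b)⟫ = lam * ⟪J X - u, w' - b⟫ :=
    real_inner_smul_right _ _ _
  rw [hkey] at h2
  have h3 : ⟪J X - u, u - J X⟫ = -‖J X - u‖ ^ 2 := by
    rw [← neg_sub (J X) u, inner_neg_right, real_inner_self_eq_norm_sq]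
  have h4 : 0 ≤ lam * ⟪J X - u, w' - b⟫ := mul_nonneg hlam.le hmono'
  have h6 : ‖J X - u‖ = 0 := by nlinarith [norm_nonneg (J X - u)]
  exact sub_eq_zero.mp (norm_eq_zero.mp h6)

lemma resolvent_firm' {lam : ℝ} (hlam : 0 < lam)
    {Op : H → Set H} (hmono : IsMonotoneOp Op) {J : H → H}
    (hJ : ∀ x : H, ∃ w ∈ Op (J x), x - J x = lam • w)
    (u v : H) : ⟪J u - J v, J u - J v⟫ ≤ ⟪J u - J v, u - v⟫ := by
  obtain ⟨wu, hwu, hequ⟩ := hJ u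
  obtain ⟨wv, hwv, heqv⟩ := hJ v
  have hmono' := hmono (J u) (J v) wu wv hwu hwv
  have hkey : lam • (wu - wv) = (u - v) - (J u - J v) := by
    rw [smul_sub, ← hequ, ← heqv]; abel
  have h2 : ⟪J u - J v, lam • (wu - wv)⟫ = lam * ⟪J u - J v, wu - wv⟫ :=
    real_inner_smul_right _ _ _
  rw [hkey, inner_sub_right] at h2
  nlinarith [mul_nonneg hlam.le hmono']

lemma resolvent_nonexpansive' {lam : ℝ} (hlam : 0 < lam)
    {Op : H → Set H} (hmono : IsMonotoneOp Op) {J : H → H}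
    (hJ : ∀ x : H, ∃ w ∈ Op (J x), x - J x = lam • w)
    (u v : H) : ‖J u - J v‖ ≤ ‖u - v‖ := by
  have h1 := resolvent_firm' hlam hmono hJ u v
  rw [real_inner_self_eq_norm_sq] at h1
  have h2 : ⟪J u - J v, u - v⟫ ≤ ‖J u - J v‖ * ‖u - v‖ :=
    real_inner_le_norm _ _
  nlinarith [norm_nonneg (J u - J v), norm_nonneg (u - v)]

lemma DR_key' {lam : ℝ} (hlam : 0 < lam)
    {A B : H → Set H} (hmA : IsMonotoneOp A) (hmB : IsMonotoneOp B) {JA JB : H → H}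
    (hJA : ∀ x : H, ∃ w ∈ A (JA x), x - JA x = lam • w)
    (hJB : ∀ x : H, ∃ w ∈ B (JB x), x - JB x = lam • w)
    (u v : H) :
    ‖(JA ((2:ℝ) • JB u - u) + u - JB u) - (JA ((2:ℝ) • JB v - v) + v - JB v)‖ ^ 2
      + ‖(u - (JA ((2:ℝ) • JB u - u) + u - JB u)) - (v - (JA ((2:ℝ) • JB v - v) + v - JB v))‖ ^ 2
      ≤ ‖u - v‖ ^ 2 := by
  set α := JB u - JB v with hα
  set β := JA ((2:ℝ) • JB u - u) - JA ((2:ℝ) • JB v - v) with hβ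
  set γ := u - v with hγ
  have e1 : (JA ((2:ℝ) • JB u - u) + u - JB u) - (JA ((2:ℝ) • JB v - v) + v - JB v)
      = β + γ - α := by rw [hα, hβ, hγ]; abel
  have e2 : (u - (JA ((2:ℝ) • JB u - u) + u - JB u)) - (v - (JA ((2:ℝ) • JB v - v) + v - JB v))
      = α - β := by rw [hα, hβ]; abel
  have hfB : ⟪α, α⟫ ≤ ⟪α, γ⟫ := resolvent_firm' hlam hmB hJB u v
  have hfA : ⟪β, β⟫ ≤ ⟪β, ((2:ℝ) • JB u - u) - ((2:ℝ) • JB v - v)⟫ :=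
    resolvent_firm' hlam hmA hJA _ _
  have e3 : ((2:ℝ) • JB u - u) - ((2:ℝ) • JB v - v) = (2:ℝ) • α - γ := by
    rw [hα, hγ, smul_sub]; abel
  rw [e3] at hfA
  have hfA' : ⟪β, β⟫ ≤ 2 * ⟪β, α⟫ - ⟪β, γ⟫ := by
    simpa [inner_sub_right, real_inner_smul_right] using hfA
  rw [e1, e2]
  rw [← real_inner_self_eq_norm_sq, ← real_inner_self_eq_norm_sq, ← real_inner_self_eq_norm_sq]
  simp only [inner_sub_left, inner_sub_right, inner_add_left, inner_add_right]
  linarith [real_inner_comm α β, real_inner_comm α γ, real_inner_comm β γ,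
    real_inner_comm γ α, real_inner_comm γ β, real_inner_comm β α]

end aux

/-- Douglas–Rachford splitting; Lions–Mercier, Svaiter: Let `A, B` be
maximal monotone operators on a real Hilbert space `H` with resolvents
`J_{λA}, J_{λB}` (`λ > 0`), and suppose `0 ∈ A(z) + B(z)` for some `z`. Then the
iterates `x_{k+1} = J_{λA}(2p_k - x_k) + x_k - p_k`, `p_{k+1} = J_{λB}(x_{k+1})`
converge weakly to some `x̂` and `p̂` with `p̂ = J_{λB}(x̂)` and `0 ∈ A(p̂) + B(p̂)`. -/
theorem stmt_13 {H : Type*} [NormedAddCommGroup H] [InnerProductSpace ℝ H]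
    [CompleteSpace H] (lam : ℝ) (hlam : 0 < lam)
    (A B : H → Set H) (hA : IsMaximalMonotoneOp A) (hB : IsMaximalMonotoneOp B)
    (JA JB : H → H)
    (hJA : ∀ x : H, ∃ w ∈ A (JA x), x - JA x = lam • w)
    (hJB : ∀ x : H, ∃ w ∈ B (JB x), x - JB x = lam • w)
    (hzero : ∃ z : H, ∃ w ∈ A z, -w ∈ B z)
    (x₀ p₀ : H) (x p : ℕ → H) (hx0 : x 0 = x₀) (hp0 : p 0 = p₀)
    (hxrec : ∀ k, x (k + 1) = JA ((2 : ℝ) • p k - x k) + x k - p k)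
    (hprec : ∀ k, p (k + 1) = JB (x (k + 1))) :
    ∃ xhat phat : H,
      (∀ w : H, Tendsto (fun k => ⟪x k, w⟫) atTop (𝓝 ⟪xhat, w⟫)) ∧
      (∀ w : H, Tendsto (fun k => ⟪p k, w⟫) atTop (𝓝 ⟪phat, w⟫)) ∧
      phat = JB xhat ∧ (∃ w ∈ A phat, -w ∈ B phat) := by
  classical
  obtain ⟨z, w0, hw0A, hw0B⟩ := hzero
  have hmA := hA.1
  have hmB := hB.1
  obtain ⟨T, hT⟩ : ∃ T : H → H, ∀ u, T u = JA ((2:ℝ) • JB u - u) + u - JB u :=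
    ⟨_, fun u => rfl⟩
  have hKI : ∀ u v, ‖T u - T v‖ ^ 2 + ‖(u - T u) - (v - T v)‖ ^ 2 ≤ ‖u - v‖ ^ 2 := by
    intro u v
    rw [hT u, hT v]
    exact DR_key' hlam hmA hmB hJA hJB u v
  have hTne : ∀ u v, ‖T u - T v‖ ≤ ‖u - v‖ := by
    intro u v
    have h := hKI u v
    have h2 : ‖T u - T v‖ ^ 2 ≤ ‖u - v‖ ^ 2 := by nlinarith [sq_nonneg ‖(u - T u) - (v - T v)‖]
    exact (pow_le_pow_iff_left₀ (norm_nonneg _) (norm_nonneg _) two_ne_zero).mp h2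
  -- fixed points
  have hfix : ∀ (X0 P0 b0 : H), b0 ∈ B P0 → (-b0) ∈ A P0 → X0 = P0 + lam • b0 →
      JB X0 = P0 ∧ JA ((2:ℝ) • P0 - X0) = P0 ∧ T X0 = X0 := by
    intro X0 P0 b0 hbB hbA hX0
    have h1 : JB X0 = P0 := resolvent_unique' hlam hmB hJB X0 P0 b0 hbB (by rw [hX0]; abel)
    have h2 : JA ((2:ℝ) • P0 - X0) = P0 :=
      resolvent_unique' hlam hmA hJA _ P0 (-b0) hbA
        (by rw [hX0, smul_neg, two_smul]; abel)
    refine ⟨h1, h2, ?_⟩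
    rw [hT, h1, h2]
    abel
  obtain ⟨xstar, hxstar⟩ : ∃ xs : H, xs = z + lam • (-w0) := ⟨_, rfl⟩
  have hw0A' : (-(-w0)) ∈ A z := by rwa [neg_neg]
  obtain ⟨hJBxs, hJAxs, hTxs⟩ := hfix xstar z (-w0) hw0B hw0A' hxstar
  -- shifted sequences
  obtain ⟨X, hX⟩ : ∃ X : ℕ → H, ∀ k, X k = x (k + 1) := ⟨_, fun _ => rfl⟩
  obtain ⟨P, hP⟩ : ∃ P : ℕ → H, ∀ k, P k = p (k + 1) := ⟨_, fun _ => rfl⟩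
  have hPX : ∀ k, P k = JB (X k) := by
    intro k
    rw [hP k, hX k]
    exact hprec k
  have hXT : ∀ k, X (k + 1) = T (X k) := by
    intro k
    rw [hT, hX (k+1), hxrec (k+1), hprec k, ← hX k]
  -- Fejér monotonicity
  have hfej : ∀ (f : H), T f = f → ∀ k, ‖X (k+1) - f‖ ≤ ‖X k - f‖ := by
    intro f hf k
    rw [hXT k]
    calc ‖T (X k) - f‖ = ‖T (X k) - T f‖ := by rw [hf]
      _ ≤ ‖X k - f‖ := hTne _ _
  have hfejmono : ∀ (f : H), T f = f → Antitone (fun k => ‖X k - f‖) :=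
    fun f hf => antitone_nat_of_succ_le (hfej f hf)
  set Rx : ℝ := ‖X 0 - xstar‖ + ‖xstar‖ with hRx
  have hXbound : ∀ k, ‖X k‖ ≤ Rx := by
    intro k
    calc ‖X k‖ = ‖(X k - xstar) + xstar‖ := by rw [sub_add_cancel]
      _ ≤ ‖X k - xstar‖ + ‖xstar‖ := norm_add_le _ _
      _ ≤ Rx := add_le_add_left (hfejmono xstar hTxs (Nat.zero_le k)) _
  set Rp : ℝ := ‖X 0 - xstar‖ + ‖z‖ with hRp
  have hPbound : ∀ k, ‖P k‖ ≤ Rp := by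
    intro k
    have h1 : ‖P k - z‖ ≤ ‖X k - xstar‖ := by
      rw [hPX k, ← hJBxs]
      exact resolvent_nonexpansive' hlam hmB hJB (X k) xstar
    calc ‖P k‖ = ‖(P k - z) + z‖ := by rw [sub_add_cancel]
      _ ≤ ‖P k - z‖ + ‖z‖ := norm_add_le _ _
      _ ≤ Rp := add_le_add_left (h1.trans (hfejmono xstar hTxs (Nat.zero_le k))) _
  -- successive differences tend to zero
  obtain ⟨D, hD⟩ : ∃ D : ℕ → H, ∀ k, D k = X (k+1) - X k := ⟨_, fun _ => rfl⟩
  have hsq : ∀ k, ‖X (k+1) - xstar‖ ^ 2 + ‖D k‖ ^ 2 ≤ ‖X k - xstar‖ ^ 2 := by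
    intro k
    have h := hKI (X k) xstar
    rw [hTxs, ← hXT k] at h
    have e : (X k - X (k+1)) - (xstar - xstar) = -(D k) := by rw [hD k]; abel
    rw [e, norm_neg] at h
    exact h
  obtain ⟨L, hL⟩ : ∃ L, Tendsto (fun k => ‖X k - xstar‖ ^ 2) atTop (𝓝 L) := by
    refine ⟨_, tendsto_atTop_ciInf ?_ ⟨0, ?_⟩⟩
    · intro a b hab
      exact pow_le_pow_left₀ (norm_nonneg _) (hfejmono xstar hTxs hab) 2
    · rintro y ⟨k, rfl⟩
      exact sq_nonneg _
  have hDnormsq : Tendsto (fun k => ‖D k‖ ^ 2) atTop (𝓝 0) := by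
    have h1 : Tendsto (fun k => ‖X k - xstar‖ ^ 2 - ‖X (k+1) - xstar‖ ^ 2) atTop (𝓝 0) := by
      have h2 := hL.sub ((tendsto_add_atTop_iff_nat 1).mpr hL)
      simpa using h2
    refine tendsto_of_tendsto_of_tendsto_of_le_of_le tendsto_const_nhds h1
      (fun k => sq_nonneg _) (fun k => by linarith [hsq k])
  have hDnorm : Tendsto (fun k => ‖D k‖) atTop (𝓝 0) := by
    have h1 : Tendsto (fun k => Real.sqrt (‖D k‖ ^ 2)) atTop (𝓝 (Real.sqrt 0)) :=
      (Real.continuous_sqrt.tendsto 0).comp hDnormsq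
    simpa [Real.sqrt_sq (norm_nonneg _)] using h1
  have hD0 : Tendsto D atTop (𝓝 0) := tendsto_zero_iff_norm_tendsto_zero.mpr hDnorm
  -- the operator sequences
  obtain ⟨Bv, hBv⟩ : ∃ Bv : ℕ → H, ∀ k, Bv k = (1/lam) • (X k - P k) := ⟨_, fun _ => rfl⟩
  have hBvmem : ∀ k, Bv k ∈ B (P k) := by
    intro k
    obtain ⟨w', hw', heq⟩ := hJB (X k)
    have hBw : Bv k = w' := by
      rw [hBv k, hPX k, heq, smul_smul, one_div, inv_mul_cancel₀ hlam.ne', one_smul]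
    rw [hBw, hPX k]
    exact hw'
  have hXPB : ∀ k, X k - P k = lam • Bv k := by
    intro k
    rw [hBv k, smul_smul, mul_one_div, div_self hlam.ne', one_smul]
  obtain ⟨Q, hQ⟩ : ∃ Q : ℕ → H, ∀ k, Q k = JA ((2:ℝ) • P k - X k) := ⟨_, fun _ => rfl⟩
  obtain ⟨Av, hAv⟩ : ∃ Av : ℕ → H, ∀ k, Av k = (1/lam) • ((2:ℝ) • P k - X k - Q k) :=
    ⟨_, fun _ => rfl⟩
  have hAvmem : ∀ k, Av k ∈ A (Q k) := by
    intro k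
    obtain ⟨w', hw', heq⟩ := hJA ((2:ℝ) • P k - X k)
    have hAw : Av k = w' := by
      rw [hAv k, hQ k, heq, smul_smul, one_div, inv_mul_cancel₀ hlam.ne', one_smul]
    rw [hAw, hQ k]
    exact hw'
  have hXQ : ∀ k, X (k+1) = Q k + X k - P k := by
    intro k
    rw [hQ k, hX (k+1), hxrec (k+1), ← hP k, ← hX k]
  have hQD : ∀ k, Q k = D k + P k := by
    intro k
    rw [hD k, hXQ k]
    abel
  have hAvBv : ∀ k, Av k = -Bv k - (1/lam) • D k := by
    intro k
    rw [hAv k, hBv k, ← smul_neg, ← smul_sub]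
    congr 1
    rw [hQD k, two_smul]
    abel
  -- bound for Bv
  set Rb : ℝ := (1/lam) * (Rx + Rp) with hRb
  have hBvbound : ∀ k, ‖Bv k‖ ≤ Rb := by
    intro k
    rw [hBv k, norm_smul]
    have : |(1:ℝ)/lam| = 1/lam := abs_of_pos (by positivity)
    rw [Real.norm_eq_abs, this]
    have h1 : ‖X k - P k‖ ≤ Rx + Rp :=
      (norm_sub_le _ _).trans (add_le_add (hXbound k) (hPbound k))
    exact mul_le_mul_of_nonneg_left h1 (by positivity)
  have hDbound : ∀ k, ‖D k‖ ≤ 2 * Rx := by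
    intro k
    rw [hD k]
    calc ‖X (k+1) - X k‖ ≤ ‖X (k+1)‖ + ‖X k‖ := norm_sub_le _ _
      _ ≤ 2 * Rx := by linarith [hXbound (k+1), hXbound k]
  -- the key vanishing inner-product combination
  have hZ : Tendsto (fun k => ⟪P k, Bv k⟫ + ⟪Q k, Av k⟫) atTop (𝓝 0) := by
    have hid : ∀ k, ⟪P k, Bv k⟫ + ⟪Q k, Av k⟫
        = ⟪D k, -Bv k⟫ - (1/lam) * ⟪D k, D k⟫ - (1/lam) * ⟪P k, D k⟫ := by
      intro k
      rw [hQD k, hAvBv k]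
      simp only [inner_add_left, inner_sub_right, inner_neg_right, real_inner_smul_right]
      ring
    have hbound : ∀ k, |⟪P k, Bv k⟫ + ⟪Q k, Av k⟫|
        ≤ (Rb + (1/lam) * (2 * Rx) + (1/lam) * Rp) * ‖D k‖ := by
      intro k
      rw [hid k]
      have h1 : |⟪D k, -Bv k⟫| ≤ ‖D k‖ * Rb := by
        refine (abs_real_inner_le_norm _ _).trans ?_
        rw [norm_neg]
        exact mul_le_mul_of_nonneg_left (hBvbound k) (norm_nonneg _)
      have h2 : |(1/lam) * ⟪D k, D k⟫| ≤ (1/lam) * (‖D k‖ * (2 * Rx)) := by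
        rw [abs_mul, abs_of_pos (show (0:ℝ) < 1/lam by positivity)]
        refine mul_le_mul_of_nonneg_left ((abs_real_inner_le_norm _ _).trans ?_) (by positivity)
        exact mul_le_mul_of_nonneg_left (hDbound k) (norm_nonneg _)
      have h3 : |(1/lam) * ⟪P k, D k⟫| ≤ (1/lam) * (Rp * ‖D k‖) := by
        rw [abs_mul, abs_of_pos (show (0:ℝ) < 1/lam by positivity)]
        refine mul_le_mul_of_nonneg_left ((abs_real_inner_le_norm _ _).trans ?_) (by positivity)
        exact mul_le_mul_of_nonneg_right (hPbound k) (norm_nonneg _)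
      calc |⟪D k, -Bv k⟫ - (1/lam) * ⟪D k, D k⟫ - (1/lam) * ⟪P k, D k⟫|
          ≤ |⟪D k, -Bv k⟫| + |(1/lam) * ⟪D k, D k⟫| + |(1/lam) * ⟪P k, D k⟫| := by
            exact (abs_sub _ _).trans (add_le_add_left ((abs_sub _ _).trans le_rfl) _)
        _ ≤ ‖D k‖ * Rb + (1/lam) * (‖D k‖ * (2*Rx)) + (1/lam) * (Rp * ‖D k‖) := by
            linarith
        _ = (Rb + (1/lam) * (2 * Rx) + (1/lam) * Rp) * ‖D k‖ := by ring
    have hC0 : Tendsto (fun k => (Rb + (1/lam) * (2 * Rx) + (1/lam) * Rp) * ‖D k‖)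
        atTop (𝓝 0) := by
      simpa using hDnorm.const_mul (Rb + (1/lam) * (2 * Rx) + (1/lam) * Rp)
    exact squeeze_zero_norm (fun k => hbound k) hC0
  -- cluster point analysis along ultrafilters
  have cluster : ∀ U : Ultrafilter ℕ, (U : Filter ℕ) ≤ atTop →
      ∃ xb pb : H, (∀ w, Tendsto (fun k => ⟪X k, w⟫) (U : Filter ℕ) (𝓝 ⟪xb, w⟫)) ∧
        (∀ w, Tendsto (fun k => ⟪P k, w⟫) (U : Filter ℕ) (𝓝 ⟪pb, w⟫)) ∧
        JB xb = pb ∧ T xb = xb ∧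
        ((1/lam) • (xb - pb)) ∈ B pb ∧ (-((1/lam) • (xb - pb))) ∈ A pb := by
    intro U hU
    obtain ⟨xb, hxb⟩ := exists_ultra_weak_limit' U X Rx hXbound
    obtain ⟨pb, hpb⟩ := exists_ultra_weak_limit' U P Rp hPbound
    obtain ⟨bb, hbb⟩ : ∃ bb : H, bb = (1/lam) • (xb - pb) := ⟨_, rfl⟩
    have hDU : ∀ w : H, Tendsto (fun k => ⟪D k, w⟫) (U : Filter ℕ) (𝓝 0) := by
      intro w
      have h1 : Tendsto (fun k => ⟪D k, w⟫) atTop (𝓝 (⟪(0:H), w⟫)) :=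
        hD0.inner tendsto_const_nhds
      simpa using h1.mono_left hU
    have hBvU : ∀ w : H, Tendsto (fun k => ⟪Bv k, w⟫) (U : Filter ℕ) (𝓝 ⟪bb, w⟫) := by
      intro w
      have h1 : ∀ k, ⟪Bv k, w⟫ = (1/lam) * (⟪X k, w⟫ - ⟪P k, w⟫) := by
        intro k
        rw [hBv k, real_inner_smul_left, inner_sub_left]
      have h2 : ⟪bb, w⟫ = (1/lam) * (⟪xb, w⟫ - ⟪pb, w⟫) := by
        rw [hbb, real_inner_smul_left, inner_sub_left]
      rw [h2]
      exact Tendsto.congr (fun k => (h1 k).symm) (((hxb w).sub (hpb w)).const_mul _)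
    have hQU : ∀ w : H, Tendsto (fun k => ⟪Q k, w⟫) (U : Filter ℕ) (𝓝 ⟪pb, w⟫) := by
      intro w
      have h1 : ∀ k, ⟪Q k, w⟫ = ⟪D k, w⟫ + ⟪P k, w⟫ := by
        intro k
        rw [hQD k, inner_add_left]
      have h2 := (hDU w).add (hpb w)
      rw [zero_add] at h2
      exact Tendsto.congr (fun k => (h1 k).symm) h2
    have hAvU : ∀ w : H, Tendsto (fun k => ⟪Av k, w⟫) (U : Filter ℕ) (𝓝 (-⟪bb, w⟫)) := by
      intro w
      have h1 : ∀ k, ⟪Av k, w⟫ = -⟪Bv k, w⟫ - (1/lam) * ⟪D k, w⟫ := by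
        intro k
        rw [hAvBv k, inner_sub_left, inner_neg_left, real_inner_smul_left]
      have h2 := (hBvU w).neg.sub ((hDU w).const_mul (1/lam))
      rw [mul_zero, sub_zero] at h2
      exact Tendsto.congr (fun k => (h1 k).symm) h2
    -- the limiting monotonicity inequality
    have hkey : ∀ u v u' v' : H, v ∈ B u → v' ∈ A u' →
        0 ≤ ⟪pb - u, bb - v⟫ + ⟪pb - u', -bb - v'⟫ := by
      intro u v u' v' hv hv'
      have hnn : ∀ k, 0 ≤ ⟪P k - u, Bv k - v⟫ + ⟪Q k - u', Av k - v'⟫ :=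
        fun k => add_nonneg (hmB (P k) u (Bv k) v (hBvmem k) hv)
          (hmA (Q k) u' (Av k) v' (hAvmem k) hv')
      have hchain := ((((((hZ.mono_left hU).sub (hpb v)).sub (hBvU u)).add_const
        (⟪u, v⟫)).sub (hQU v')).sub (hAvU u')).add_const (⟪u', v'⟫)
      have hlim : Tendsto (fun k => ⟪P k - u, Bv k - v⟫ + ⟪Q k - u', Av k - v'⟫)
          (U : Filter ℕ)
          (𝓝 (⟪pb - u, bb - v⟫ + ⟪pb - u', -bb - v'⟫)) := by
        have heqval : (⟪pb - u, bb - v⟫ + ⟪pb - u', -bb - v'⟫)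
            = 0 - ⟪pb, v⟫ - ⟪bb, u⟫ + ⟪u, v⟫ - ⟪pb, v'⟫ - -⟪bb, u'⟫ + ⟪u', v'⟫ := by
          simp only [inner_sub_left, inner_sub_right, inner_neg_right, inner_neg_left]
          linarith [real_inner_comm u bb, real_inner_comm u' bb]
        rw [heqval]
        refine Tendsto.congr (fun k => ?_) hchain
        simp only [inner_sub_left, inner_sub_right]
        linarith [real_inner_comm u (Bv k), real_inner_comm u' (Av k)]
      exact ge_of_tendsto hlim (Eventually.of_forall hnn)
    -- dichotomy to get memberships
    have hmemboth : bb ∈ B pb ∧ (-bb) ∈ A pb := by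
      rcases le_total (⟪pb - z, -bb - w0⟫) 0 with hc | hc
      · have h1 : bb ∈ B pb := hB.2 pb bb (fun u v hv => by
          linarith [hkey u v z w0 hv hw0A])
        have h2 : (-bb) ∈ A pb := hA.2 pb (-bb) (fun u' v' hv' => by
          have h3 := hkey pb bb u' v' h1 hv'
          simpa using h3)
        exact ⟨h1, h2⟩
      · have hc2 : ⟪pb - z, bb - (-w0)⟫ ≤ 0 := by
          have e : bb - (-w0) = -(-bb - w0) := by abel
          rw [e, inner_neg_right]
          linarith
        have h2 : (-bb) ∈ A pb := hA.2 pb (-bb) (fun u' v' hv' => by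
          linarith [hkey z (-w0) u' v' hw0B hv'])
        have h1 : bb ∈ B pb := hB.2 pb bb (fun u v hv => by
          have h3 := hkey u v pb (-bb) hv h2
          simpa using h3)
        exact ⟨h1, h2⟩
    have hlamb : lam • bb = xb - pb := by
      rw [hbb, smul_smul, mul_one_div, div_self hlam.ne', one_smul]
    obtain ⟨hf1, hf2, hf3⟩ := hfix xb pb bb hmemboth.1 hmemboth.2 (by rw [hlamb]; abel)
    refine ⟨xb, pb, hxb, hpb, hf1, hf3, ?_, ?_⟩
    · rw [← hbb]; exact hmemboth.1
    · rw [← hbb]; exact hmemboth.2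
  -- extract the designated cluster point
  obtain ⟨xh, ph, hxh, hph, hJBxh, hTxh, hmemBh, hmemAh⟩ :=
    cluster (Ultrafilter.of atTop) (Ultrafilter.of_le _)
  -- convergence of distances to fixed points
  have hnormconv : ∀ f : H, T f = f → ∃ Lf, Tendsto (fun k => ‖X k - f‖ ^ 2) atTop (𝓝 Lf) := by
    intro f hf
    refine ⟨_, tendsto_atTop_ciInf ?_ ⟨0, ?_⟩⟩
    · intro a b hab
      exact pow_le_pow_left₀ (norm_nonneg _) (hfejmono f hf hab) 2
    · rintro y ⟨k, rfl⟩
      exact sq_nonneg _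
  -- uniqueness of weak cluster points (Opial)
  have huniqfix : ∀ (U : Ultrafilter ℕ), (U : Filter ℕ) ≤ atTop → ∀ xb : H, T xb = xb →
      (∀ w, Tendsto (fun k => ⟪X k, w⟫) (U : Filter ℕ) (𝓝 ⟪xb, w⟫)) → xb = xh := by
    intro U hU xb hTxb hxbU
    obtain ⟨L1, hL1⟩ := hnormconv xh hTxh
    obtain ⟨L2, hL2⟩ := hnormconv xb hTxb
    have hg : Tendsto (fun k => ⟪X k, xh - xb⟫) atTop
        (𝓝 ((‖xh‖ ^ 2 - ‖xb‖ ^ 2 - (L1 - L2)) / 2)) := by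
      have h1 : ∀ k, ⟪X k, xh - xb⟫
          = (‖xh‖ ^ 2 - ‖xb‖ ^ 2 - (‖X k - xh‖ ^ 2 - ‖X k - xb‖ ^ 2)) / 2 := by
        intro k
        rw [norm_sub_sq_real, norm_sub_sq_real, inner_sub_right]
        ring
      have h2 := (tendsto_const_nhds (x := ‖xh‖ ^ 2 - ‖xb‖ ^ 2)).sub (hL1.sub hL2)
      exact Tendsto.congr (fun k => (h1 k).symm) (h2.div_const 2)
    have e1 : ⟪xh, xh - xb⟫ = (‖xh‖ ^ 2 - ‖xb‖ ^ 2 - (L1 - L2)) / 2 :=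
      tendsto_nhds_unique (hxh (xh - xb)) (hg.mono_left (Ultrafilter.of_le _))
    have e2 : ⟪xb, xh - xb⟫ = (‖xh‖ ^ 2 - ‖xb‖ ^ 2 - (L1 - L2)) / 2 :=
      tendsto_nhds_unique (hxbU (xh - xb)) (hg.mono_left hU)
    have e3 : ⟪xh - xb, xh - xb⟫ = 0 := by
      rw [inner_sub_left, e1, e2]
      ring
    have e4 : xh - xb = 0 := inner_self_eq_zero.mp e3
    rw [sub_eq_zero] at e4
    exact e4.symm
  -- assemble the result
  refine ⟨xh, ph, ?_, ?_, hJBxh.symm, ⟨-((1/lam) • (xh - ph)), hmemAh, by simpa using hmemBh⟩⟩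
  · intro w
    rw [← tendsto_add_atTop_iff_nat 1, tendsto_iff_ultrafilter]
    intro U hU
    obtain ⟨xb, pb, hxbU, hpbU, hJBxb, hTxb, _, _⟩ := cluster U hU
    have hxbxh : xb = xh := huniqfix U hU xb hTxb hxbU
    have h5 : ∀ k : ℕ, ⟪x (k + 1), w⟫ = ⟪X k, w⟫ := fun k => by rw [hX k]
    exact Tendsto.congr (fun k => (h5 k).symm) (hxbxh ▸ hxbU w)
  · intro w
    rw [← tendsto_add_atTop_iff_nat 1, tendsto_iff_ultrafilter]
    intro U hU
    obtain ⟨xb, pb, hxbU, hpbU, hJBxb, hTxb, _, _⟩ := cluster U hU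
    have hxbxh : xb = xh := huniqfix U hU xb hTxb hxbU
    have hpbph : pb = ph := by rw [← hJBxb, hxbxh, hJBxh]
    have h5 : ∀ k : ℕ, ⟪p (k + 1), w⟫ = ⟪P k, w⟫ := fun k => by rw [hP k]
    exact Tendsto.congr (fun k => (h5 k).symm) (hpbph ▸ hpbU w)
end

section
/- Let H be a real Hilbert space, λ > 0, and let A, B : H → Set(H) be maximal monotone set-valued operators with resolvents J_{λA}, J_{λB} : H → H (so x − J_{λA}(x) ∈ λ·A(J_{λA}(x)) and x − J_{λB}(x) ∈ λ·B(J_{λB}(x)) for all x). Assume there exists z ∈ H with 0 ∈ A(z) + B(z). Let (α_k) and (β_k) be sequences in H with ∑_{k}(‖α_k‖ + ‖β_k‖) < ∞. Given x₀ ∈ H, define for k ≥ 0: x_{k+1} = x_k + J_{λA}(2(J_{λB}(x_k) + β_k) − x_k) + α_k − (J_{λB}(x_k) + β_k). Then there exist x̂, p̂ ∈ H such that x_k converges weakly to x̂ and p_k := J_{λB}(x_k) converges weakly to p̂; moreover p̂ = J_{λB}(x̂) and 0 ∈ A(p̂) + B(p̂). -/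
open RealInnerProductSpace Filter Topology

/-! ### Auxiliary lemmas -/

section Ultra

lemma ultra_lim {g : ℕ → ℝ} {C : ℝ} (hg : ∀ k, |g k| ≤ C) (V : Ultrafilter ℕ) :
    ∃ c, |c| ≤ C ∧ Tendsto g (V : Filter ℕ) (𝓝 c) := by
  have h1 : ↑(V.map g) ≤ 𝓟 (Set.Icc (-C) C) := by
    rw [Ultrafilter.coe_map, Filter.le_principal_iff, Filter.mem_map]
    have : ∀ k : ℕ, g k ∈ Set.Icc (-C) C := fun k => by
      have := abs_le.mp (hg k); exact ⟨this.1, this.2⟩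
    exact Filter.univ_mem' this
  obtain ⟨c, hc, hle⟩ := (isCompact_Icc (a := -C) (b := C)).ultrafilter_le_nhds (V.map g) h1
  refine ⟨c, abs_le.2 ⟨hc.1, hc.2⟩, ?_⟩
  rwa [Ultrafilter.coe_map] at hle

lemma tendsto_of_ultra {g : ℕ → ℝ} {a : ℝ}
    (h : ∀ V : Ultrafilter ℕ, (V : Filter ℕ) ≤ atTop → Tendsto g (V : Filter ℕ) (𝓝 a)) :
    Tendsto g atTop (𝓝 a) := by
  by_contra hcon
  rw [Metric.tendsto_atTop] at hcon
  push_neg at hcon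
  obtain ⟨ε, hε, hfreq⟩ := hcon
  have hfreq' : ∃ᶠ k in atTop, ε ≤ dist (g k) a := by
    rw [frequently_atTop]
    intro n; obtain ⟨k, hk1, hk2⟩ := hfreq n; exact ⟨k, hk1, hk2⟩
  rw [frequently_iff_neBot] at hfreq'
  set F := atTop ⊓ 𝓟 {k | ε ≤ dist (g k) a} with hF
  have hle : (Ultrafilter.of F : Filter ℕ) ≤ atTop := (Ultrafilter.of_le F).trans inf_le_left
  have h2 := h (Ultrafilter.of F) hle
  have h3 : ∀ᶠ k in (Ultrafilter.of F : Filter ℕ), ε ≤ dist (g k) a := by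
    have hmem : {k | ε ≤ dist (g k) a} ∈ F := by
      rw [hF]; exact Filter.mem_inf_of_right (Filter.mem_principal_self _)
    exact (Ultrafilter.of_le F) hmem
  have h4 : ∀ᶠ k in (Ultrafilter.of F : Filter ℕ), dist (g k) a < ε :=
    (Metric.tendsto_nhds.mp h2) ε hε
  obtain ⟨k, hk1, hk2⟩ := (h3.and h4).exists
  linarith

lemma weak_ultra_lim {H : Type*} [NormedAddCommGroup H] [InnerProductSpace ℝ H]
    [CompleteSpace H] {u : ℕ → H} {C : ℝ} (hu : ∀ k, ‖u k‖ ≤ C) (V : Ultrafilter ℕ) :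
    ∃ uhat : H, ∀ w : H, Tendsto (fun k => ⟪u k, w⟫) (V : Filter ℕ) (𝓝 ⟪uhat, w⟫) := by
  have key : ∀ w : H, ∃ c : ℝ, |c| ≤ C * ‖w‖ ∧
      Tendsto (fun k => ⟪u k, w⟫) (V : Filter ℕ) (𝓝 c) := by
    intro w
    apply ultra_lim (C := C * ‖w‖) (fun k => ?_) V
    calc |⟪u k, w⟫| ≤ ‖u k‖ * ‖w‖ := abs_real_inner_le_norm _ _
      _ ≤ C * ‖w‖ := mul_le_mul_of_nonneg_right (hu k) (norm_nonneg w)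
  choose f hfb hft using key
  have hadd : ∀ w₁ w₂, f (w₁ + w₂) = f w₁ + f w₂ := by
    intro w₁ w₂
    refine tendsto_nhds_unique (hft (w₁ + w₂)) ?_
    have := (hft w₁).add (hft w₂)
    simpa [inner_add_right] using this
  have hsmul : ∀ (c : ℝ) w, f (c • w) = c * f w := by
    intro c w
    refine tendsto_nhds_unique (hft (c • w)) ?_
    have := (hft w).const_mul c
    simpa [real_inner_smul_right, mul_comm] using this
  let fl : H →ₗ[ℝ] ℝ :=
    { toFun := f, map_add' := hadd, map_smul' := fun c w => by simp [hsmul c w] }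
  let fc : H →L[ℝ] ℝ := LinearMap.mkContinuous fl C (fun w => by
    simpa [fl, Real.norm_eq_abs] using hfb w)
  refine ⟨(InnerProductSpace.toDual ℝ H).symm fc, fun w => ?_⟩
  have : ⟪(InnerProductSpace.toDual ℝ H).symm fc, w⟫ = fc w := by
    rw [← InnerProductSpace.toDual_apply_apply]
    simp
  rw [this]
  exact hft w

end Ultra

lemma fejer_limit {d ε : ℕ → ℝ} (hd0 : ∀ k, 0 ≤ d k) (hε0 : ∀ k, 0 ≤ ε k)
    (hsum : Summable ε) (hrec : ∀ k, d (k + 1) ≤ d k + ε k) :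
    ∃ l, Tendsto d atTop (𝓝 l) := by
  set S : ℕ → ℝ := fun k => ∑' j, ε (j + k) with hSdef
  have hSsum : ∀ k, Summable fun j => ε (j + k) := fun k => (summable_nat_add_iff k).mpr hsum
  have hS : ∀ k, S k = ε k + S (k + 1) := by
    intro k
    have h1 := Summable.tsum_eq_zero_add (hSsum k)
    simp only [zero_add] at h1
    rw [hSdef]
    simp only
    rw [h1]
    congr 1
    apply tsum_congr; intro j; congr 1; omega
  have hSnn : ∀ k, 0 ≤ S k := fun k => tsum_nonneg (fun j => hε0 _)
  have hanti : Antitone (fun k => d k + S k) := by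
    apply antitone_nat_of_succ_le
    intro k
    have h1 := hrec k
    have h2 := hS k
    linarith
  have hbdd : BddBelow (Set.range fun k => d k + S k) := by
    refine ⟨0, ?_⟩
    rintro y ⟨k, rfl⟩
    exact add_nonneg (hd0 k) (hSnn k)
  have h1 : Tendsto (fun k => d k + S k) atTop (𝓝 (⨅ k, d k + S k)) :=
    tendsto_atTop_ciInf hanti hbdd
  have h2 : Tendsto S atTop (𝓝 0) := tendsto_sum_nat_add ε
  refine ⟨⨅ k, d k + S k, ?_⟩
  have := h1.sub h2
  simpa using this

section Resolvent
variable {H : Type*} [NormedAddCommGroup H] [InnerProductSpace ℝ H]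
  {lam : ℝ} (hlam : 0 < lam) {M : H → Set H} (hM : IsMonotoneOp M)
  {J : H → H} (hJ : ∀ x : H, ∃ w ∈ M (J x), x - J x = lam • w)

include hlam hM hJ

lemma res_unique {u p b : H} (hb : b ∈ M p) (heq : u - p = lam • b) : J u = p := by
  obtain ⟨w, hw, hweq⟩ := hJ u
  have h0 : (0:ℝ) ≤ ⟪p - J u, b - w⟫ := hM _ _ _ _ hb hw
  have h1 : lam • (b - w) = J u - p := by
    rw [smul_sub, ← heq, ← hweq]; abel
  have h2 : lam * ⟪p - J u, b - w⟫ = -‖p - J u‖^2 := by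
    rw [← real_inner_smul_right, h1]
    have : p - J u = -(J u - p) := by abel
    rw [this, inner_neg_left, real_inner_self_eq_norm_sq, norm_neg]
  have h3 : (0:ℝ) ≤ -‖p - J u‖^2 := h2 ▸ mul_nonneg hlam.le h0
  have : ‖p - J u‖^2 ≤ 0 := by linarith
  have : p - J u = 0 := by
    have := (pow_eq_zero_iff (n := 2) (by norm_num)).mp (le_antisymm this (by positivity))
    exact norm_eq_zero.mp this
  rw [← sub_eq_zero]; rw [← neg_sub p (J u), this, neg_zero]

lemma res_firm (u v : H) : ‖J u - J v‖^2 ≤ ⟪J u - J v, u - v⟫ := by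
  obtain ⟨a, ha, hae⟩ := hJ u
  obtain ⟨b, hb, hbe⟩ := hJ v
  have h0 : (0:ℝ) ≤ ⟪J u - J v, a - b⟫ := hM _ _ _ _ ha hb
  have h1 : lam • (a - b) = (u - v) - (J u - J v) := by
    rw [smul_sub, ← hae, ← hbe]; abel
  have h2 : lam * ⟪J u - J v, a - b⟫ = ⟪J u - J v, u - v⟫ - ‖J u - J v‖^2 := by
    rw [← real_inner_smul_right, h1, inner_sub_right, real_inner_self_eq_norm_sq]
  nlinarith [mul_nonneg hlam.le h0]

lemma res_nonexp (u v : H) : ‖J u - J v‖ ≤ ‖u - v‖ := by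
  rcases eq_or_lt_of_le (norm_nonneg (J u - J v)) with h | h
  · rw [← h]; exact norm_nonneg _
  · have h1 := res_firm hlam hM hJ u v
    have h2 : ⟪J u - J v, u - v⟫ ≤ ‖J u - J v‖ * ‖u - v‖ := real_inner_le_norm _ _
    nlinarith

lemma refl_nonexp (u v : H) :
    ‖((2:ℝ) • J u - u) - ((2:ℝ) • J v - v)‖ ≤ ‖u - v‖ := by
  have key : ‖((2:ℝ) • J u - u) - ((2:ℝ) • J v - v)‖^2 ≤ ‖u - v‖^2 := by
    have hid : ((2:ℝ) • J u - u) - ((2:ℝ) • J v - v) = (2:ℝ) • (J u - J v) - (u - v) := by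
      rw [smul_sub]; abel
    rw [hid, norm_sub_sq_real, norm_smul, real_inner_smul_left]
    have h1 := res_firm hlam hM hJ u v
    simp only [Real.norm_ofNat]
    nlinarith
  nlinarith [norm_nonneg (((2:ℝ) • J u - u) - ((2:ℝ) • J v - v)), norm_nonneg (u - v)]

end Resolvent

section Tlem
variable {H : Type*} [NormedAddCommGroup H] [InnerProductSpace ℝ H]
  {lam : ℝ} (hlam : 0 < lam)
  {A B : H → Set H} (hA : IsMonotoneOp A) (hB : IsMonotoneOp B)
  {JA JB : H → H}
  (hJA : ∀ x : H, ∃ w ∈ A (JA x), x - JA x = lam • w)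
  (hJB : ∀ x : H, ∃ w ∈ B (JB x), x - JB x = lam • w)

include hlam hA hB hJA hJB

set_option linter.unusedSectionVars false in
lemma T_half (u : H) : u + JA ((2:ℝ) • JB u - u) - JB u
    = (2⁻¹ : ℝ) • (u + (((2:ℝ) • JA ((2:ℝ) • JB u - u) - ((2:ℝ) • JB u - u)))) := by
  rw [smul_add, smul_sub, smul_sub, smul_smul]
  norm_num
  module

lemma S_nonexp (u v : H) :
    ‖((2:ℝ) • JA ((2:ℝ) • JB u - u) - ((2:ℝ) • JB u - u)) -
     ((2:ℝ) • JA ((2:ℝ) • JB v - v) - ((2:ℝ) • JB v - v))‖ ≤ ‖u - v‖ :=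
  (refl_nonexp hlam hA hJA _ _).trans (refl_nonexp hlam hB hJB u v)

lemma T_nonexp (u v : H) :
    ‖(u + JA ((2:ℝ) • JB u - u) - JB u) - (v + JA ((2:ℝ) • JB v - v) - JB v)‖ ≤ ‖u - v‖ := by
  set Su := (2:ℝ) • JA ((2:ℝ) • JB u - u) - ((2:ℝ) • JB u - u) with hSu
  set Sv := (2:ℝ) • JA ((2:ℝ) • JB v - v) - ((2:ℝ) • JB v - v) with hSv
  have h1 : (u + JA ((2:ℝ) • JB u - u) - JB u) - (v + JA ((2:ℝ) • JB v - v) - JB v)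
      = (2⁻¹:ℝ) • ((u - v) + (Su - Sv)) := by
    rw [hSu, hSv]
    set au := JA ((2:ℝ) • JB u - u)
    set av := JA ((2:ℝ) • JB v - v)
    set bu := JB u
    set bv := JB v
    module
  rw [h1, norm_smul]
  have h2 := S_nonexp hlam hA hB hJA hJB u v
  have h3 := norm_add_le (u - v) (Su - Sv)
  simp only [norm_inv, Real.norm_ofNat]
  nlinarith [norm_nonneg ((u-v) + (Su - Sv))]

lemma T_firm (u v : H) :
    0 ≤ ⟪(u + JA ((2:ℝ) • JB u - u) - JB u) - (v + JA ((2:ℝ) • JB v - v) - JB v),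
        (u - v) - ((u + JA ((2:ℝ) • JB u - u) - JB u) - (v + JA ((2:ℝ) • JB v - v) - JB v))⟫ := by
  set Su := (2:ℝ) • JA ((2:ℝ) • JB u - u) - ((2:ℝ) • JB u - u) with hSu
  set Sv := (2:ℝ) • JA ((2:ℝ) • JB v - v) - ((2:ℝ) • JB v - v) with hSv
  have h1 : (u + JA ((2:ℝ) • JB u - u) - JB u) - (v + JA ((2:ℝ) • JB v - v) - JB v)
      = (2⁻¹:ℝ) • ((u - v) + (Su - Sv)) := by
    rw [hSu, hSv]
    set au := JA ((2:ℝ) • JB u - u)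
    set av := JA ((2:ℝ) • JB v - v)
    set bu := JB u
    set bv := JB v
    module
  have h2 : (u - v) - (2⁻¹:ℝ) • ((u - v) + (Su - Sv)) = (2⁻¹:ℝ) • ((u - v) - (Su - Sv)) := by
    module
  rw [h1, h2, real_inner_smul_left, real_inner_smul_right]
  have h3 : ⟪(u - v) + (Su - Sv), (u - v) - (Su - Sv)⟫ = ‖u - v‖^2 - ‖Su - Sv‖^2 := by
    rw [inner_sub_right, inner_add_left, inner_add_left,
      real_inner_self_eq_norm_sq, real_inner_self_eq_norm_sq, real_inner_comm (Su - Sv) (u - v)]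
    ring
  rw [h3]
  have h4 := S_nonexp hlam hA hB hJA hJB u v
  nlinarith [norm_nonneg (Su - Sv)]

end Tlem

lemma inner_alg {H : Type*} [NormedAddCommGroup H] [InnerProductSpace ℝ H] (p x β s : H) :
    ⟪p, x - p⟫ + ⟪p + s, (2:ℝ)•(p + β) - x - (p + s)⟫
      = ⟪p, (2:ℝ)•β - s⟫ + ⟪s, (p - x) + ((2:ℝ)•β - s)⟫ := by
  simp only [inner_sub_right, inner_add_right, inner_add_left, inner_smul_right, inner_sub_left]
  ring

set_option maxHeartbeats 4000000 in
/-- inexact Douglas–Rachford splitting; Svaiter: Let `A, B` be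
maximal monotone operators on a real Hilbert space `H` with resolvents
`J_{λA}, J_{λB}` (`λ > 0`), suppose `0 ∈ A(z) + B(z)` for some `z`, and let
`(α_k), (β_k)` be error sequences with `∑ₖ (‖α_k‖ + ‖β_k‖) < ∞`. Then the iterates
`x_{k+1} = x_k + J_{λA}(2(J_{λB}(x_k) + β_k) - x_k) + α_k - (J_{λB}(x_k) + β_k)`
converge weakly to some `x̂`, `p_k := J_{λB}(x_k)` converges weakly to some `p̂`,
and `p̂ = J_{λB}(x̂)` with `0 ∈ A(p̂) + B(p̂)`. -/
theorem stmt_14 {H : Type*} [NormedAddCommGroup H] [InnerProductSpace ℝ H]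
    [CompleteSpace H] (lam : ℝ) (hlam : 0 < lam)
    (A B : H → Set H) (hA : IsMaximalMonotoneOp A) (hB : IsMaximalMonotoneOp B)
    (JA JB : H → H)
    (hJA : ∀ x : H, ∃ w ∈ A (JA x), x - JA x = lam • w)
    (hJB : ∀ x : H, ∃ w ∈ B (JB x), x - JB x = lam • w)
    (hzero : ∃ z : H, ∃ w ∈ A z, -w ∈ B z)
    (α β : ℕ → H) (herr : Summable (fun k => ‖α k‖ + ‖β k‖))
    (x₀ : H) (x : ℕ → H) (hx0 : x 0 = x₀)
    (hxrec : ∀ k, x (k + 1) =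
      x k + JA ((2 : ℝ) • (JB (x k) + β k) - x k) + α k - (JB (x k) + β k)) :
    ∃ xhat phat : H,
      (∀ w : H, Tendsto (fun k => ⟪x k, w⟫) atTop (𝓝 ⟪xhat, w⟫)) ∧
      (∀ w : H, Tendsto (fun k => ⟪JB (x k), w⟫) atTop (𝓝 ⟪phat, w⟫)) ∧
      phat = JB xhat ∧ (∃ w ∈ A phat, -w ∈ B phat) := by
  obtain ⟨hmA, -⟩ := hA
  obtain ⟨hmB, -⟩ := hB
  have hlam' : lam ≠ 0 := ne_of_gt hlam
  clear hx0
  -- abbreviations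
  set T : H → H := fun u => u + JA ((2:ℝ) • JB u - u) - JB u with hT
  have hTapp : ∀ u, T u = u + JA ((2:ℝ) • JB u - u) - JB u := fun u => rfl
  set p : ℕ → H := fun k => JB (x k) with hp
  have hpapp : ∀ k, p k = JB (x k) := fun k => rfl
  set q : ℕ → H := fun k => JA ((2:ℝ) • (p k + β k) - x k) with hq
  set e : ℕ → H := fun k => x (k + 1) - T (x k) with he
  set s : ℕ → H := fun k => q k - p k with hs
  set εn : ℕ → ℝ := fun k => ‖α k‖ + ‖β k‖ with hεn
  have hεnn : ∀ k, 0 ≤ εn k := fun k => add_nonneg (norm_nonneg _) (norm_nonneg _)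
  have herr' : Summable εn := herr
  have hεto0 : Tendsto εn atTop (𝓝 0) := herr'.tendsto_atTop_zero
  have hβ0 : Tendsto (fun k => ‖β k‖) atTop (𝓝 0) := by
    apply squeeze_zero (fun k => norm_nonneg _) (fun k => ?_) hεto0
    rw [hεn]; simp only; linarith [norm_nonneg (α k)]
  -- T nonexpansive / firm
  have hTnon : ∀ u v, ‖T u - T v‖ ≤ ‖u - v‖ := by
    intro u v; rw [hTapp, hTapp]; exact T_nonexp hlam hmA hmB hJA hJB u v
  have hTfirm : ∀ u v, 0 ≤ ⟪T u - T v, (u - v) - (T u - T v)⟫ := by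
    intro u v; rw [hTapp, hTapp]; exact T_firm hlam hmA hmB hJA hJB u v
  -- fixed point xs
  obtain ⟨z, w0, hw0A, hw0B⟩ := hzero
  set xs : H := z - lam • w0 with hxs
  have hJBxs : JB xs = z := by
    apply res_unique hlam hmB hJB hw0B
    rw [hxs, smul_neg]; abel
  have hJAxs : JA ((2:ℝ) • z - xs) = z := by
    apply res_unique hlam hmA hJA hw0A
    rw [hxs, two_smul]; abel
  have hTxs : T xs = xs := by
    rw [hTapp, hJBxs, hJAxs]; abel
  -- recursion
  have hrec : ∀ k, x (k + 1) = x k + q k + α k - (p k + β k) := by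
    intro k; exact hxrec k
  -- error bound
  have he_eq : ∀ k, e k = (JA ((2:ℝ) • (p k + β k) - x k) - JA ((2:ℝ) • p k - x k))
      + (α k - β k) := by
    intro k
    rw [he]
    simp only
    rw [hxrec k, hTapp, hpapp]
    abel
  have he_bd : ∀ k, ‖e k‖ ≤ 3 * εn k := by
    intro k
    rw [he_eq k]
    have h1 : ‖JA ((2:ℝ) • (p k + β k) - x k) - JA ((2:ℝ) • p k - x k)‖ ≤ 2 * ‖β k‖ := by
      refine (res_nonexp hlam hmA hJA _ _).trans ?_
      have h2 : ((2:ℝ) • (p k + β k) - x k) - ((2:ℝ) • p k - x k) = (2:ℝ) • β k := by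
        rw [smul_add]; abel
      rw [h2, norm_smul]
      simp [Real.norm_ofNat]
    have h3 := norm_add_le (JA ((2:ℝ) • (p k + β k) - x k) - JA ((2:ℝ) • p k - x k)) (α k - β k)
    have h4 := norm_sub_le (α k) (β k)
    rw [hεn]
    simp only
    linarith [norm_nonneg (α k)]
  -- Fejér
  have hfejer : ∀ u, T u = u → ∀ k, ‖x (k+1) - u‖ ≤ ‖x k - u‖ + 3 * εn k := by
    intro u hu k
    have h1 : x (k+1) - u = e k + (T (x k) - T u) := by
      rw [hu, he]; simp only; abel
    rw [h1]
    calc ‖e k + (T (x k) - T u)‖ ≤ ‖e k‖ + ‖T (x k) - T u‖ := norm_add_le _ _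
      _ ≤ 3 * εn k + ‖x k - u‖ := add_le_add (he_bd k) (hTnon (x k) u)
      _ = ‖x k - u‖ + 3 * εn k := by ring
  have hsum3 : Summable (fun k => 3 * εn k) := herr'.mul_left 3
  have hdist : ∀ u, T u = u → ∃ l, Tendsto (fun k => ‖x k - u‖) atTop (𝓝 l) := by
    intro u hu
    exact fejer_limit (fun k => norm_nonneg _) (fun k => by positivity) hsum3 (hfejer u hu)
  -- boundedness
  set M : ℝ := ‖x 0 - xs‖ + ∑' k, 3 * εn k with hM
  have hdM : ∀ k, ‖x k - xs‖ ≤ M := by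
    have key : ∀ k, ‖x k - xs‖ ≤ ‖x 0 - xs‖ + ∑ j ∈ Finset.range k, 3 * εn j := by
      intro k
      induction k with
      | zero => simp
      | succ n ih =>
        have h1 := hfejer xs hTxs n
        rw [Finset.sum_range_succ]
        linarith
    intro k
    refine (key k).trans ?_
    have h2 := Summable.sum_le_tsum (Finset.range k) (fun i _ => by positivity) hsum3
    rw [hM]; linarith
  have hxbd : ∀ k, ‖x k‖ ≤ M + ‖xs‖ := by
    intro k
    calc ‖x k‖ = ‖(x k - xs) + xs‖ := by rw [sub_add_cancel]
      _ ≤ ‖x k - xs‖ + ‖xs‖ := norm_add_le _ _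
      _ ≤ M + ‖xs‖ := by linarith [hdM k]
  have hpbd : ∀ k, ‖p k‖ ≤ M + ‖z‖ := by
    intro k
    have h1 : ‖p k - z‖ ≤ ‖x k - xs‖ := by
      rw [hpapp, ← hJBxs]
      exact res_nonexp hlam hmB hJB (x k) xs
    calc ‖p k‖ = ‖(p k - z) + z‖ := by rw [sub_add_cancel]
      _ ≤ ‖p k - z‖ + ‖z‖ := norm_add_le _ _
      _ ≤ M + ‖z‖ := by linarith [hdM k]
  -- residual to zero
  obtain ⟨l, hl⟩ := hdist xs hTxs
  have hfirm : ∀ k, ‖x k - T (x k)‖^2 ≤ ‖x k - xs‖^2 - ‖T (x k) - xs‖^2 := by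
    intro k
    have h0 := hTfirm (x k) xs
    rw [hTxs] at h0
    rw [inner_sub_right, real_inner_self_eq_norm_sq] at h0
    have h2 : ‖x k - T (x k)‖^2 = ‖(x k - xs) - (T (x k) - xs)‖^2 := by
      congr 1; congr 1; abel
    rw [h2, norm_sub_sq_real]
    have hcs : ⟪x k - xs, T (x k) - xs⟫ = ⟪T (x k) - xs, x k - xs⟫ := real_inner_comm _ _
    linarith
  have hlow : ∀ k, ‖x (k+1) - xs‖ ≤ 3 * εn k + ‖T (x k) - xs‖ := by
    intro k
    have h1 : x (k+1) - xs = e k + (T (x k) - xs) := by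
      rw [he]; simp only; abel
    rw [h1]
    exact (norm_add_le _ _).trans (by linarith [he_bd k])
  have hkey : ∀ k, ‖x k - T (x k)‖^2
      ≤ ‖x k - xs‖^2 - ‖x (k+1) - xs‖^2 + 2 * M * (3 * εn k) := by
    intro k
    have h1 := hfirm k
    have h2 := hlow k
    have h3 : ‖T (x k) - xs‖ ≤ ‖x k - xs‖ := by
      have := hTnon (x k) xs; rwa [hTxs] at this
    have h4 := hdM (k+1)
    have h5 : (0:ℝ) ≤ ‖T (x k) - xs‖ := norm_nonneg _
    have h6 : (0:ℝ) ≤ ‖x (k+1) - xs‖ := norm_nonneg _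
    have h7 := hεnn k
    have h8 := hdM k
    have h9 : (0:ℝ) ≤ ‖x k - xs‖ := norm_nonneg _
    nlinarith [mul_nonneg (add_nonneg h5 h6) (by linarith : (0:ℝ) ≤ ‖T (x k) - xs‖ - ‖x (k+1) - xs‖ + 3 * εn k)]
  have hsq : Tendsto (fun k => ‖x k - T (x k)‖^2) atTop (𝓝 0) := by
    have ha : Tendsto (fun k => ‖x k - xs‖^2) atTop (𝓝 (l^2)) := hl.pow 2
    have hb : Tendsto (fun k => ‖x (k+1) - xs‖^2) atTop (𝓝 (l^2)) := by
      have := ha.comp (tendsto_add_atTop_nat 1)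
      exact this
    have hc : Tendsto (fun k => ‖x k - xs‖^2 - ‖x (k+1) - xs‖^2 + 2 * M * (3 * εn k))
        atTop (𝓝 0) := by
      have hd : Tendsto (fun k => 2 * M * (3 * εn k)) atTop (𝓝 (2 * M * 3 * 0)) :=
        (hεto0.const_mul (2 * M * 3)).congr (fun k => by ring)
      rw [mul_zero] at hd
      have h1 := (ha.sub hb).add hd
      simpa using h1
    exact squeeze_zero (fun k => sq_nonneg _) hkey hc
  have hres : Tendsto (fun k => ‖x k - T (x k)‖) atTop (𝓝 0) := by
    have h2 : Tendsto (fun k => Real.sqrt (‖x k - T (x k)‖^2)) atTop (𝓝 (Real.sqrt 0)) :=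
      (Real.continuous_sqrt.tendsto 0).comp hsq
    rw [Real.sqrt_zero] at h2
    exact h2.congr (fun k => Real.sqrt_sq (norm_nonneg _))
  -- s to zero
  have hs_eq : ∀ k, s k = e k + (T (x k) - x k) + (β k - α k) := by
    intro k
    have h0 := hrec k
    rw [hs, he]
    simp only
    rw [h0]
    abel
  have hsbd : ∀ k, ‖s k‖ ≤ 4 * εn k + ‖x k - T (x k)‖ := by
    intro k
    rw [hs_eq k]
    have h1 := norm_add_le (e k + (T (x k) - x k)) (β k - α k)
    have h2 := norm_add_le (e k) (T (x k) - x k)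
    have h3 : ‖T (x k) - x k‖ = ‖x k - T (x k)‖ := norm_sub_rev _ _
    have h4 := norm_sub_le (β k) (α k)
    have h5 := he_bd k
    have h6 : εn k = ‖α k‖ + ‖β k‖ := rfl
    linarith [norm_nonneg (α k), norm_nonneg (β k)]
  have hsnorm : Tendsto (fun k => ‖s k‖) atTop (𝓝 0) := by
    have hg : Tendsto (fun k => 4 * εn k + ‖x k - T (x k)‖) atTop (𝓝 (4 * 0 + 0)) :=
      (hεto0.const_mul 4).add hres
    simp only [mul_zero, add_zero] at hg
    exact squeeze_zero (fun k => norm_nonneg _) hsbd hg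
  -- membership facts
  have hbmem : ∀ k, lam⁻¹ • (x k - p k) ∈ B (p k) := by
    intro k
    obtain ⟨w', hw', hwe⟩ := hJB (x k)
    have h1 : lam⁻¹ • (x k - p k) = w' := by
      rw [hpapp, hwe, inv_smul_smul₀ hlam']
    rw [h1, hpapp]
    exact hw'
  have hamem : ∀ k, lam⁻¹ • ((2:ℝ) • (p k + β k) - x k - q k) ∈ A (q k) := by
    intro k
    obtain ⟨w', hw', hwe⟩ := hJA ((2:ℝ) • (p k + β k) - x k)
    have hqk : q k = JA ((2:ℝ) • (p k + β k) - x k) := rfl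
    have h1 : lam⁻¹ • ((2:ℝ) • (p k + β k) - x k - q k) = w' := by
      rw [hqk, hwe, inv_smul_smul₀ hlam']
    rw [h1, hqk]
    exact hw'
  have hq_pk : ∀ k, q k = p k + s k := by
    intro k
    have : s k = q k - p k := rfl
    rw [this]; abel
  -- scalar null limits
  have hsw : ∀ w : H, Tendsto (fun k => ⟪s k, w⟫) atTop (𝓝 0) := by
    intro w
    have ha : Tendsto (fun k => ‖s k‖ * ‖w‖) atTop (𝓝 0) := by
      simpa using hsnorm.mul_const ‖w‖
    exact squeeze_zero_norm
      (fun k => by rw [Real.norm_eq_abs]; exact abs_real_inner_le_norm _ _) ha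
  have hβw : ∀ w : H, Tendsto (fun k => ⟪β k, w⟫) atTop (𝓝 0) := by
    intro w
    have ha : Tendsto (fun k => ‖β k‖ * ‖w‖) atTop (𝓝 0) := by
      simpa using hβ0.mul_const ‖w‖
    exact squeeze_zero_norm
      (fun k => by rw [Real.norm_eq_abs]; exact abs_real_inner_le_norm _ _) ha
  -- CLUSTER LEMMA
  have hcluster : ∀ V : Ultrafilter ℕ, (V : Filter ℕ) ≤ atTop →
      ∃ xh : H, (∀ w : H, Tendsto (fun k => ⟪x k, w⟫) (V : Filter ℕ) (𝓝 ⟪xh, w⟫)) ∧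
        T xh = xh ∧
        (∀ w : H, Tendsto (fun k => ⟪p k, w⟫) (V : Filter ℕ) (𝓝 ⟪JB xh, w⟫)) ∧
        (∃ w ∈ A (JB xh), -w ∈ B (JB xh)) := by
    intro V hV
    obtain ⟨xh, hxh⟩ := weak_ultra_lim hxbd V
    obtain ⟨p', hp'⟩ := weak_ultra_lim hpbd V
    set b' : H := lam⁻¹ • (xh - p') with hb'
    -- weak limits of b, q, a
    have hbw : ∀ w : H, Tendsto (fun k => ⟪lam⁻¹ • (x k - p k), w⟫) (V : Filter ℕ)
        (𝓝 ⟪b', w⟫) := by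
      intro w
      have h1 : ∀ k, lam⁻¹ * (⟪x k, w⟫ - ⟪p k, w⟫) = ⟪lam⁻¹ • (x k - p k), w⟫ := by
        intro k; rw [real_inner_smul_left, inner_sub_left]
      have h2 : ⟪b', w⟫ = lam⁻¹ * (⟪xh, w⟫ - ⟪p', w⟫) := by
        rw [hb', real_inner_smul_left, inner_sub_left]
      rw [h2]
      exact (((hxh w).sub (hp' w)).const_mul lam⁻¹).congr h1
    have hqw : ∀ w : H, Tendsto (fun k => ⟪q k, w⟫) (V : Filter ℕ) (𝓝 ⟪p', w⟫) := by
      intro w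
      have h1 : Tendsto (fun k => ⟪p k, w⟫ + ⟪s k, w⟫) (V : Filter ℕ) (𝓝 (⟪p', w⟫ + 0)) :=
        (hp' w).add ((hsw w).mono_left hV)
      rw [add_zero] at h1
      exact h1.congr (fun k => by rw [← inner_add_left, ← hq_pk k])
    have haw : ∀ w : H, Tendsto (fun k => ⟪lam⁻¹ • ((2:ℝ) • (p k + β k) - x k - q k), w⟫)
        (V : Filter ℕ) (𝓝 ⟪-b', w⟫) := by
      intro w
      have h1 : ∀ k, lam⁻¹ * ((2 * ⟪p k, w⟫ + 2 * ⟪β k, w⟫) - ⟪x k, w⟫ - ⟪q k, w⟫)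
          = ⟪lam⁻¹ • ((2:ℝ) • (p k + β k) - x k - q k), w⟫ := by
        intro k
        rw [real_inner_smul_left, inner_sub_left, inner_sub_left, real_inner_smul_left,
          inner_add_left]
        ring
      have h2 : ⟪-b', w⟫ = lam⁻¹ * ((2 * ⟪p', w⟫ + 2 * 0) - ⟪xh, w⟫ - ⟪p', w⟫) := by
        rw [inner_neg_left, hb', real_inner_smul_left, inner_sub_left]
        ring
      rw [h2]
      refine (Tendsto.const_mul lam⁻¹ ?_).congr h1
      exact ((((hp' w).const_mul 2).add (((hβw w).mono_left hV).const_mul 2)).sub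
        (hxh w)).sub (hqw w)
    -- product limit
    have hPid : ∀ k, lam * (⟪p k, lam⁻¹ • (x k - p k)⟫
        + ⟪q k, lam⁻¹ • ((2:ℝ) • (p k + β k) - x k - q k)⟫)
        = ⟪p k, (2:ℝ) • β k - s k⟫ + ⟪s k, (p k - x k) + ((2:ℝ) • β k - s k)⟫ := by
      intro k
      rw [real_inner_smul_right, real_inner_smul_right]
      rw [mul_add, ← mul_assoc, ← mul_assoc, mul_inv_cancel₀ hlam', one_mul, one_mul]
      rw [hq_pk k]
      exact inner_alg _ _ _ _
    have hP0 : Tendsto (fun k => ⟪p k, lam⁻¹ • (x k - p k)⟫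
        + ⟪q k, lam⁻¹ • ((2:ℝ) • (p k + β k) - x k - q k)⟫) atTop (𝓝 0) := by
      have hR : Tendsto (fun k => ⟪p k, (2:ℝ) • β k - s k⟫
          + ⟪s k, (p k - x k) + ((2:ℝ) • β k - s k)⟫) atTop (𝓝 0) := by
        have hbnd : ∀ k, ‖⟪p k, (2:ℝ) • β k - s k⟫
            + ⟪s k, (p k - x k) + ((2:ℝ) • β k - s k)⟫‖
            ≤ (M + ‖z‖) * (2 * ‖β k‖ + ‖s k‖)
            + ‖s k‖ * (((M + ‖z‖) + (M + ‖xs‖)) + (2 * ‖β k‖ + ‖s k‖)) := by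
          intro k
          have hv1 : ‖(2:ℝ) • β k - s k‖ ≤ 2 * ‖β k‖ + ‖s k‖ := by
            refine (norm_sub_le _ _).trans ?_
            rw [norm_smul]; simp [Real.norm_ofNat]
          have hv2 : ‖(p k - x k) + ((2:ℝ) • β k - s k)‖
              ≤ ((M + ‖z‖) + (M + ‖xs‖)) + (2 * ‖β k‖ + ‖s k‖) := by
            refine (norm_add_le _ _).trans (add_le_add ?_ hv1)
            refine (norm_sub_le _ _).trans (add_le_add (hpbd k) (hxbd k))
          have hi1 : |⟪p k, (2:ℝ) • β k - s k⟫| ≤ (M + ‖z‖) * (2 * ‖β k‖ + ‖s k‖) :=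
            (abs_real_inner_le_norm _ _).trans
              (mul_le_mul (hpbd k) hv1 (norm_nonneg _) ((norm_nonneg (p 0)).trans (hpbd 0)))
          have hi2 : |⟪s k, (p k - x k) + ((2:ℝ) • β k - s k)⟫|
              ≤ ‖s k‖ * (((M + ‖z‖) + (M + ‖xs‖)) + (2 * ‖β k‖ + ‖s k‖)) :=
            (abs_real_inner_le_norm _ _).trans
              (mul_le_mul_of_nonneg_left hv2 (norm_nonneg _))
          rw [Real.norm_eq_abs]
          calc |⟪p k, (2:ℝ) • β k - s k⟫ + ⟪s k, (p k - x k) + ((2:ℝ) • β k - s k)⟫|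
              ≤ |⟪p k, (2:ℝ) • β k - s k⟫| + |⟪s k, (p k - x k) + ((2:ℝ) • β k - s k)⟫| :=
                abs_add_le _ _
            _ ≤ _ := add_le_add hi1 hi2
        refine squeeze_zero_norm hbnd ?_
        have h1 : Tendsto (fun k => 2 * ‖β k‖ + ‖s k‖) atTop (𝓝 (2 * 0 + 0)) :=
          (hβ0.const_mul 2).add hsnorm
        simp only [mul_zero, add_zero] at h1
        have h2 : Tendsto (fun k => (M + ‖z‖) * (2 * ‖β k‖ + ‖s k‖)) atTop (𝓝 0) := by
          have := h1.const_mul (M + ‖z‖)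
          simpa using this
        have h3 : Tendsto (fun k => ‖s k‖ * (((M + ‖z‖) + (M + ‖xs‖)) + (2 * ‖β k‖ + ‖s k‖)))
            atTop (𝓝 (0 * (((M + ‖z‖) + (M + ‖xs‖)) + 0))) :=
          hsnorm.mul (tendsto_const_nhds.add h1)
        rw [zero_mul] at h3
        have := h2.add h3
        simpa using this
      have h4 := hR.const_mul lam⁻¹
      rw [mul_zero] at h4
      refine h4.congr (fun k => ?_)
      rw [← hPid k, ← mul_assoc, inv_mul_cancel₀ hlam', one_mul]
    -- key inequality
    have hkeyineq : ∀ u v u' v' : H, v ∈ B u → v' ∈ A u' →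
        0 ≤ ⟪p' - u, b' - v⟫ + ⟪p' - u', -b' - v'⟫ := by
      intro u v u' v' hv hv'
      have hFk : ∀ k, 0 ≤ ⟪p k - u, lam⁻¹ • (x k - p k) - v⟫
          + ⟪q k - u', lam⁻¹ • ((2:ℝ) • (p k + β k) - x k - q k) - v'⟫ :=
        fun k => add_nonneg (hmB _ _ _ _ (hbmem k) hv) (hmA _ _ _ _ (hamem k) hv')
      have hexp : ∀ k, ⟪p k - u, lam⁻¹ • (x k - p k) - v⟫
          + ⟪q k - u', lam⁻¹ • ((2:ℝ) • (p k + β k) - x k - q k) - v'⟫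
          = ((⟪p k, lam⁻¹ • (x k - p k)⟫
              + ⟪q k, lam⁻¹ • ((2:ℝ) • (p k + β k) - x k - q k)⟫)
            - ⟪p k, v⟫ - ⟪lam⁻¹ • (x k - p k), u⟫ + ⟪u, v⟫
            - ⟪q k, v'⟫ - ⟪lam⁻¹ • ((2:ℝ) • (p k + β k) - x k - q k), u'⟫ + ⟪u', v'⟫) := by
        intro k
        simp only [inner_sub_left, inner_sub_right]
        rw [real_inner_comm u (lam⁻¹ • (x k - p k)),
          real_inner_comm u' (lam⁻¹ • ((2:ℝ) • (p k + β k) - x k - q k))]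
        ring
      have htarget : ⟪p' - u, b' - v⟫ + ⟪p' - u', -b' - v'⟫
          = (0:ℝ) - ⟪p', v⟫ - ⟪b', u⟫ + ⟪u, v⟫ - ⟪p', v'⟫ - ⟪-b', u'⟫ + ⟪u', v'⟫ := by
        simp only [inner_sub_left, inner_sub_right, inner_neg_left, inner_neg_right]
        rw [real_inner_comm b' u, real_inner_comm b' u']
        ring
      have h1 : Tendsto (fun k => ((⟪p k, lam⁻¹ • (x k - p k)⟫
              + ⟪q k, lam⁻¹ • ((2:ℝ) • (p k + β k) - x k - q k)⟫)
            - ⟪p k, v⟫ - ⟪lam⁻¹ • (x k - p k), u⟫ + ⟪u, v⟫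
            - ⟪q k, v'⟫ - ⟪lam⁻¹ • ((2:ℝ) • (p k + β k) - x k - q k), u'⟫ + ⟪u', v'⟫))
          (V : Filter ℕ)
          (𝓝 ((0:ℝ) - ⟪p', v⟫ - ⟪b', u⟫ + ⟪u, v⟫ - ⟪p', v'⟫ - ⟪-b', u'⟫ + ⟪u', v'⟫)) := by
        exact ((((((hP0.mono_left hV).sub (hp' v)).sub (hbw u)).add
          tendsto_const_nhds).sub (hqw v')).sub (haw u')).add tendsto_const_nhds
      rw [htarget]
      have h2 := h1.congr (fun k => (hexp k).symm)
      exact ge_of_tendsto' h2 hFk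
    -- conclusions of the cluster analysis
    have hx_eq : p' + lam • b' = xh := by
      rw [hb', smul_inv_smul₀ hlam']; abel
    obtain ⟨wB, hwBmem, hwBeq⟩ := hJB xh
    obtain ⟨wA, hwAmem, hwAeq⟩ := hJA (p' - lam • b')
    have hkey2 := hkeyineq (JB xh) wB (JA (p' - lam • b')) wA hwBmem hwAmem
    have e1 : b' - wB = lam⁻¹ • (JB xh - p') := by
      have hwB : wB = lam⁻¹ • (xh - JB xh) := by rw [hwBeq, inv_smul_smul₀ hlam']
      rw [hwB, hb', ← smul_sub]
      congr 1; abel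
    have e2 : -b' - wA = lam⁻¹ • (JA (p' - lam • b') - p') := by
      have hwA : wA = lam⁻¹ • ((p' - lam • b') - JA (p' - lam • b')) := by
        rw [hwAeq, inv_smul_smul₀ hlam']
      rw [hwA]
      match_scalars <;> field_simp <;> norm_num
    rw [e1, e2] at hkey2
    have hq1 : ⟪p' - JB xh, lam⁻¹ • (JB xh - p')⟫ = -(lam⁻¹ * ‖p' - JB xh‖^2) := by
      rw [real_inner_smul_right]
      have h1 : JB xh - p' = -(p' - JB xh) := by abel
      rw [h1, inner_neg_right, real_inner_self_eq_norm_sq]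
      ring
    have hq2 : ⟪p' - JA (p' - lam • b'), lam⁻¹ • (JA (p' - lam • b') - p')⟫
        = -(lam⁻¹ * ‖p' - JA (p' - lam • b')‖^2) := by
      rw [real_inner_smul_right]
      have h1 : JA (p' - lam • b') - p' = -(p' - JA (p' - lam • b')) := by abel
      rw [h1, inner_neg_right, real_inner_self_eq_norm_sq]
      ring
    rw [hq1, hq2] at hkey2
    have hlaminv : (0:ℝ) < lam⁻¹ := inv_pos.mpr hlam
    have hA2 := sq_nonneg ‖p' - JB xh‖
    have hC2 := sq_nonneg ‖p' - JA (p' - lam • b')‖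
    have hmA2 := mul_nonneg hlaminv.le hA2
    have hmC2 := mul_nonneg hlaminv.le hC2
    have hJBp : JB xh = p' := by
      have h5 : lam⁻¹ * ‖p' - JB xh‖^2 = 0 := by linarith
      have h6 : ‖p' - JB xh‖^2 = 0 := by
        rcases mul_eq_zero.mp h5 with h | h
        · exact absurd h (ne_of_gt hlaminv)
        · exact h
      have h7 : ‖p' - JB xh‖ = 0 := (pow_eq_zero_iff (n := 2) (by norm_num)).mp h6
      exact (sub_eq_zero.mp (norm_eq_zero.mp h7)).symm
    have hJAp : JA (p' - lam • b') = p' := by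
      have h5 : lam⁻¹ * ‖p' - JA (p' - lam • b')‖^2 = 0 := by linarith
      have h6 : ‖p' - JA (p' - lam • b')‖^2 = 0 := by
        rcases mul_eq_zero.mp h5 with h | h
        · exact absurd h (ne_of_gt hlaminv)
        · exact h
      have h7 : ‖p' - JA (p' - lam • b')‖ = 0 := (pow_eq_zero_iff (n := 2) (by norm_num)).mp h6
      exact (sub_eq_zero.mp (norm_eq_zero.mp h7)).symm
    have hwBb : wB = b' := by
      have hwB : wB = lam⁻¹ • (xh - JB xh) := by rw [hwBeq, inv_smul_smul₀ hlam']
      rw [hwB, hJBp, hb']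
    have hwAb : wA = -b' := by
      have hwA : wA = lam⁻¹ • ((p' - lam • b') - JA (p' - lam • b')) := by
        rw [hwAeq, inv_smul_smul₀ hlam']
      rw [hwA, hJAp]
      match_scalars <;> field_simp <;> norm_num
    have hTxh : T xh = xh := by
      rw [hTapp]
      have harg : (2:ℝ) • JB xh - xh = p' - lam • b' := by
        rw [hJBp, ← hx_eq, two_smul]; abel
      rw [harg, hJAp, hJBp, ← hx_eq]; abel
    refine ⟨xh, hxh, hTxh, ?_, ?_⟩
    · intro w; rw [hJBp]; exact hp' w
    · refine ⟨wA, ?_, ?_⟩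
      · rw [hJBp, ← hJAp]
        exact hwAmem
      · rw [hwAb, neg_neg, ← hwBb, hJBp]
        rw [hJBp] at hwBmem
        exact hwBmem
  -- OPIAL + conclusion
  have hatTopNe : (atTop : Filter ℕ).NeBot := atTop_neBot
  have hUle : ((Ultrafilter.of atTop : Ultrafilter ℕ) : Filter ℕ) ≤ atTop := Ultrafilter.of_le _
  obtain ⟨xh, hxhw, hTxh, hphw, hmem⟩ := hcluster (Ultrafilter.of atTop) hUle
  have hopial : ∀ (V : Ultrafilter ℕ), (V : Filter ℕ) ≤ atTop → ∀ xh',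
      (∀ w, Tendsto (fun k => ⟪x k, w⟫) (V : Filter ℕ) (𝓝 ⟪xh', w⟫)) → T xh' = xh' →
      xh' = xh := by
    intro V hV xh' hxh'w hTxh'
    obtain ⟨l1, hl1⟩ := hdist xh hTxh
    obtain ⟨l2, hl2⟩ := hdist xh' hTxh'
    have hck : ∀ k, ⟪x k, xh - xh'⟫
        = (‖x k - xh'‖^2 - ‖x k - xh‖^2 - ‖xh'‖^2 + ‖xh‖^2) / 2 := by
      intro k
      rw [norm_sub_sq_real, norm_sub_sq_real, inner_sub_right]
      ring
    have hcc : Tendsto (fun k => ⟪x k, xh - xh'⟫) atTop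
        (𝓝 ((l2^2 - l1^2 - ‖xh'‖^2 + ‖xh‖^2) / 2)) := by
      have h1 : Tendsto (fun k => (‖x k - xh'‖^2 - ‖x k - xh‖^2 - ‖xh'‖^2 + ‖xh‖^2) / 2)
          atTop (𝓝 ((l2^2 - l1^2 - ‖xh'‖^2 + ‖xh‖^2) / 2)) := by
        apply Tendsto.div_const
        exact (((hl2.pow 2).sub (hl1.pow 2)).sub tendsto_const_nhds).add tendsto_const_nhds
      exact h1.congr (fun k => (hck k).symm)
    have h1 : ⟪xh, xh - xh'⟫ = (l2^2 - l1^2 - ‖xh'‖^2 + ‖xh‖^2) / 2 :=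
      tendsto_nhds_unique (hxhw (xh - xh')) (hcc.mono_left hUle)
    have h2 : ⟪xh', xh - xh'⟫ = (l2^2 - l1^2 - ‖xh'‖^2 + ‖xh‖^2) / 2 :=
      tendsto_nhds_unique (hxh'w (xh - xh')) (hcc.mono_left hV)
    have h3 : ⟪xh - xh', xh - xh'⟫ = 0 := by
      rw [inner_sub_left, h1, h2]; ring
    have h4 : xh - xh' = 0 := inner_self_eq_zero.mp h3
    have := sub_eq_zero.mp h4
    exact this.symm
  refine ⟨xh, JB xh, ?_, ?_, rfl, hmem⟩
  · intro w
    apply tendsto_of_ultra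
    intro V hV
    obtain ⟨xh', hxh'w, hTxh', hph'w, -⟩ := hcluster V hV
    rw [← hopial V hV xh' hxh'w hTxh']
    exact hxh'w w
  · intro w
    apply tendsto_of_ultra
    intro V hV
    obtain ⟨xh', hxh'w, hTxh', hph'w, -⟩ := hcluster V hV
    have hEq := hopial V hV xh' hxh'w hTxh'
    rw [← hEq]
    exact hph'w w
end
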